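/- arXiv:2002.08576 — 9 statements merged into one kernel-verified Lean document; each statement's English description precedes it below -/
import Mathlib

section
/- Let l be any line of PG(3,q). Then the number of tangent planes of PG(3,q) containing l is equal to the number of black points lying on l. -/
open Submodule Set

/-- The points of `PG(3,q)`: the 1-dimensional subspaces of a 4-dimensional
vector space over the field `K` of order `q`. -/
def pgPoint (K : Type) [Field K] : Set (Submodule K (Fin 4 → K)) :=
  {W | Module.finrank K ↥W = 1}

/-- The lines of `PG(3,q)`: the 2-dimensional subspaces. -/
def pgLine (K : Type) [Field K] : Set (Submodule K (Fin 4 → K)) :=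
  {W | Module.finrank K ↥W = 2}

/-- The planes of `PG(3,q)`: the 3-dimensional subspaces. -/
def pgPlane (K : Type) [Field K] : Set (Submodule K (Fin 4 → K)) :=
  {W | Module.finrank K ↥W = 3}

/-- The lines of the family `S` passing through the point `p`. -/
def linesThru (K : Type) [Field K] (S : Set (Submodule K (Fin 4 → K)))
    (p : Submodule K (Fin 4 → K)) : Set (Submodule K (Fin 4 → K)) :=
  {l | l ∈ S ∧ p ≤ l}

/-- The lines of the family `S` contained in the plane `π` (the set `S_π`). -/
def linesIn (K : Type) [Field K] (S : Set (Submodule K (Fin 4 → K)))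
    (π : Submodule K (Fin 4 → K)) : Set (Submodule K (Fin 4 → K)) :=
  {l | l ∈ S ∧ l ≤ π}

/-- The lines of `S_π` belonging to the pencil of lines of the plane `π`
through the point `p`. -/
def pencilS (K : Type) [Field K] (S : Set (Submodule K (Fin 4 → K)))
    (p π : Submodule K (Fin 4 → K)) : Set (Submodule K (Fin 4 → K)) :=
  {l | l ∈ S ∧ p ≤ l ∧ l ≤ π}

/-- Property (P1): every point lies on exactly `q(q+1)/2` or exactly `q^2`
lines of `S`, and both numbers are attained. -/
def P1 (K : Type) [Field K] (S : Set (Submodule K (Fin 4 → K))) (q : ℕ) : Prop :=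
  (∀ p ∈ pgPoint K, (linesThru K S p).ncard = q * (q + 1) / 2 ∨
      (linesThru K S p).ncard = q ^ 2) ∧
  (∃ p ∈ pgPoint K, (linesThru K S p).ncard = q * (q + 1) / 2) ∧
  (∃ p ∈ pgPoint K, (linesThru K S p).ncard = q ^ 2)

/-- Property (P2): every plane contains exactly `q(q+1)/2` or exactly `q^2`
lines of `S`. -/
def P2 (K : Type) [Field K] (S : Set (Submodule K (Fin 4 → K))) (q : ℕ) : Prop :=
  ∀ π ∈ pgPlane K, (linesIn K S π).ncard = q * (q + 1) / 2 ∨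
    (linesIn K S π).ncard = q ^ 2

/-- Property (P2a): if a plane contains `q^2` lines of `S`, then every pencil of
lines in that plane contains `0` or `q` lines of `S`. -/
def P2a (K : Type) [Field K] (S : Set (Submodule K (Fin 4 → K))) (q : ℕ) : Prop :=
  ∀ π ∈ pgPlane K, (linesIn K S π).ncard = q ^ 2 →
    ∀ p ∈ pgPoint K, p ≤ π →
      (pencilS K S p π).ncard = 0 ∨ (pencilS K S p π).ncard = q

/-- Property (P2b): if a plane contains `q(q+1)/2` lines of `S`, then every
pencil of lines in that plane contains `(q-1)/2`, `(q+1)/2` or `q` lines of `S`. -/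
def P2b (K : Type) [Field K] (S : Set (Submodule K (Fin 4 → K))) (q : ℕ) : Prop :=
  ∀ π ∈ pgPlane K, (linesIn K S π).ncard = q * (q + 1) / 2 →
    ∀ p ∈ pgPoint K, p ≤ π →
      (pencilS K S p π).ncard = (q - 1) / 2 ∨
      (pencilS K S p π).ncard = (q + 1) / 2 ∨
      (pencilS K S p π).ncard = q

/-- A point is black if it lies on exactly `q^2` lines of `S`. -/
def IsBlack (K : Type) [Field K] (S : Set (Submodule K (Fin 4 → K))) (q : ℕ)
    (p : Submodule K (Fin 4 → K)) : Prop :=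
  p ∈ pgPoint K ∧ (linesThru K S p).ncard = q ^ 2

/-- A plane is tangent if it contains exactly `q^2` lines of `S`. -/
def IsTangent (K : Type) [Field K] (S : Set (Submodule K (Fin 4 → K))) (q : ℕ)
    (π : Submodule K (Fin 4 → K)) : Prop :=
  π ∈ pgPlane K ∧ (linesIn K S π).ncard = q ^ 2

/-- A plane is secant if it contains exactly `q(q+1)/2` lines of `S`. -/
def IsSecant (K : Type) [Field K] (S : Set (Submodule K (Fin 4 → K))) (q : ℕ)
    (π : Submodule K (Fin 4 → K)) : Prop :=
  π ∈ pgPlane K ∧ (linesIn K S π).ncard = q * (q + 1) / 2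

/-- For a secant plane `π`, the set `α(π)` of points of `π` lying on exactly
`(q-1)/2` lines of `S_π`. -/
def alphaSet (K : Type) [Field K] (S : Set (Submodule K (Fin 4 → K))) (q : ℕ)
    (π : Submodule K (Fin 4 → K)) : Set (Submodule K (Fin 4 → K)) :=
  {p | p ∈ pgPoint K ∧ p ≤ π ∧ (pencilS K S p π).ncard = (q - 1) / 2}

/-- For a secant plane `π`, the set `β(π)` of points of `π` lying on exactly
`(q+1)/2` lines of `S_π`. -/
def betaSet (K : Type) [Field K] (S : Set (Submodule K (Fin 4 → K))) (q : ℕ)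
    (π : Submodule K (Fin 4 → K)) : Set (Submodule K (Fin 4 → K)) :=
  {p | p ∈ pgPoint K ∧ p ≤ π ∧ (pencilS K S p π).ncard = (q + 1) / 2}

/-- For a secant plane `π`, the set `γ(π)` of points of `π` lying on exactly
`q` lines of `S_π`. -/
def gammaSet (K : Type) [Field K] (S : Set (Submodule K (Fin 4 → K))) (q : ℕ)
    (π : Submodule K (Fin 4 → K)) : Set (Submodule K (Fin 4 → K)) :=
  {p | p ∈ pgPoint K ∧ p ≤ π ∧ (pencilS K S p π).ncard = q}



section AuxPG

open Module

set_option synthInstance.maxHeartbeats 1000000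
set_option maxHeartbeats 1000000

lemma nat_card_submodule {K V : Type} [Field K] [Fintype K] [AddCommGroup V] [Module K V]
    [Finite V] (W : Submodule K V) : Nat.card W = Fintype.card K ^ finrank K W := by
  have : Fintype V := Fintype.ofFinite _
  have : Fintype W := Fintype.ofFinite _
  rw [Nat.card_eq_fintype_card]; exact card_eq_pow_finrank

lemma ncard_nonzero {K V : Type} [Field K] [Fintype K] [AddCommGroup V] [Module K V]
    [Finite V] (W : Submodule K V) :
    {x : V | x ∈ W ∧ x ≠ 0}.ncard = Fintype.card K ^ finrank K W - 1 := by
  have h1 : {x : V | x ∈ W ∧ x ≠ 0} = (W : Set V) \ {0} := by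
    ext x; simp [and_comm]
  rw [h1, Set.ncard_diff_singleton_of_mem (W.zero_mem), ← nat_card_submodule]
  congr 1

lemma count_rank_one_le {K V : Type} [Field K] [Fintype K] [AddCommGroup V] [Module K V]
    [Finite V] (q : ℕ) (hq : Fintype.card K = q) (W : Submodule K V) (hW : finrank K W = 2) :
    {p : Submodule K V | finrank K p = 1 ∧ p ≤ W}.ncard = q + 1 := by
  classical
  have hfd : FiniteDimensional K V := inferInstance
  have hq2 : 2 ≤ q := hq ▸ Fintype.one_lt_card
  have hsfin : {x : V | x ∈ W ∧ x ≠ 0}.Finite := Set.toFinite _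
  have htfin : {p : Submodule K V | finrank K p = 1 ∧ p ≤ W}.Finite := Set.toFinite _
  have hmap : ∀ x ∈ hsfin.toFinset, span K {x} ∈ htfin.toFinset := by
    intro x hx
    rw [Set.Finite.mem_toFinset] at hx ⊢
    exact ⟨finrank_span_singleton hx.2, span_le.2 (Set.singleton_subset_iff.2 hx.1)⟩
  have hcount := Finset.card_eq_sum_card_fiberwise hmap
  have hfiber : ∀ p ∈ htfin.toFinset,
      (hsfin.toFinset.filter (fun x => span K {x} = p)).card = q - 1 := by
    intro p hp
    rw [Set.Finite.mem_toFinset] at hp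
    have hfin2 : {x : V | x ∈ p ∧ x ≠ 0}.Finite := Set.toFinite _
    have heq : hsfin.toFinset.filter (fun x => span K {x} = p) = hfin2.toFinset := by
      ext x
      simp only [Finset.mem_filter, Set.Finite.mem_toFinset, Set.mem_setOf_eq]
      constructor
      · rintro ⟨⟨hxW, hx0⟩, hsp⟩
        exact ⟨hsp ▸ Submodule.mem_span_singleton_self x, hx0⟩
      · rintro ⟨hxp, hx0⟩
        refine ⟨⟨hp.2 hxp, hx0⟩, ?_⟩
        exact Submodule.eq_of_le_of_finrank_eq
          ((span_le).2 (Set.singleton_subset_iff.2 hxp))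
          (by rw [finrank_span_singleton hx0, hp.1])
    rw [heq, ← Set.ncard_eq_toFinset_card _ hfin2, ncard_nonzero, hp.1, pow_one, hq]
  rw [Finset.sum_congr rfl hfiber, Finset.sum_const, smul_eq_mul,
    ← Set.ncard_eq_toFinset_card _ hsfin, ncard_nonzero, hW, hq,
    ← Set.ncard_eq_toFinset_card _ htfin] at hcount
  obtain ⟨r, hr⟩ : ∃ r, q = r + 2 := ⟨q - 2, by omega⟩
  have e0 : (r + 2) ^ 2 = (r + 3) * (r + 1) + 1 := by ring
  rw [hr, e0, show r+2-1 = r+1 from rfl] at hcount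
  have hc : {p : Submodule K V | finrank K p = 1 ∧ p ≤ W}.ncard * (r + 1) =
      (r + 3) * (r + 1) := by omega
  have := Nat.eq_of_mul_eq_mul_right (Nat.succ_pos r) hc
  omega

lemma finrank_map_mkQ {K : Type} [Field K] [Fintype K] (l π : Submodule K (Fin 4 → K))
    (hl : finrank K l = 2) (hlπ : l ≤ π) :
    finrank K (π.map l.mkQ) + 2 = finrank K π := by
  have hrange : LinearMap.range (l.mkQ ∘ₗ π.subtype) = π.map l.mkQ := by
    rw [LinearMap.range_comp, Submodule.range_subtype]
  have hker : LinearMap.ker (l.mkQ ∘ₗ π.subtype) = l.comap π.subtype := by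
    rw [LinearMap.ker_comp, Submodule.ker_mkQ]
  have h1 := LinearMap.finrank_range_add_finrank_ker (l.mkQ ∘ₗ π.subtype)
  rw [hrange, hker] at h1
  have h2 : finrank K (l.comap π.subtype) = finrank K l :=
    LinearEquiv.finrank_eq (Submodule.comapSubtypeEquivOfLe hlπ)
  omega

lemma count_planes {K : Type} [Field K] [Fintype K] (q : ℕ) (hq : Fintype.card K = q)
    (l : Submodule K (Fin 4 → K)) (hl : finrank K l = 2) :
    {π : Submodule K (Fin 4 → K) | finrank K π = 3 ∧ l ≤ π}.ncard = q + 1 := by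
  have hV : finrank K (Fin 4 → K) = 4 := by simp
  have hQ : finrank K (⊤ : Submodule K ((Fin 4 → K) ⧸ l)) = 2 := by
    rw [finrank_top]
    have := Submodule.finrank_quotient_add_finrank l
    omega
  have himg : {π : Submodule K (Fin 4 → K) | finrank K π = 3 ∧ l ≤ π} =
      (fun P => P.comap l.mkQ) ''
        {P : Submodule K ((Fin 4 → K) ⧸ l) | finrank K P = 1 ∧ P ≤ ⊤} := by
    ext π
    simp only [Set.mem_image, Set.mem_setOf_eq]
    constructor
    · rintro ⟨hπ3, hlπ⟩
      refine ⟨π.map l.mkQ, ⟨?_, le_top⟩, ?_⟩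
      · have := finrank_map_mkQ l π hl hlπ; omega
      · rw [Submodule.comap_map_eq, Submodule.ker_mkQ, sup_eq_left.2 hlπ]
    · rintro ⟨P, ⟨hP1, -⟩, rfl⟩
      have hle : l ≤ P.comap l.mkQ := by
        intro x hx
        simp [Submodule.mem_comap, (Submodule.Quotient.mk_eq_zero l).2 hx]
      have hmap : (P.comap l.mkQ).map l.mkQ = P :=
        Submodule.map_comap_eq_of_surjective (Submodule.mkQ_surjective l) P
      have := finrank_map_mkQ l (P.comap l.mkQ) hl hle
      rw [hmap, hP1] at this
      exact ⟨this.symm, hle⟩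
  rw [himg, Set.ncard_image_of_injective _
    (Submodule.comap_injective_of_surjective (Submodule.mkQ_surjective l))]
  exact count_rank_one_le q hq _ hQ

lemma fiber_eq {K : Type} [Field K] [Fintype K] (l m : Submodule K (Fin 4 → K))
    (hl : finrank K l = 2) (hm : finrank K m = 2) :
    {p : Submodule K (Fin 4 → K) | finrank K p = 1 ∧ p ≤ l ∧ p ≤ m}.ncard
      = {π : Submodule K (Fin 4 → K) | finrank K π = 3 ∧ l ≤ π ∧ m ≤ π}.ncard := by
  have hV : finrank K (Fin 4 → K) = 4 := by simp
  by_cases hml : m = l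
  · subst hml
    have e1 : {p : Submodule K (Fin 4 → K) | finrank K p = 1 ∧ p ≤ m ∧ p ≤ m} =
        {p : Submodule K (Fin 4 → K) | finrank K p = 1 ∧ p ≤ m} := by ext p; simp [and_assoc, and_self]
    have e2 : {π : Submodule K (Fin 4 → K) | finrank K π = 3 ∧ m ≤ π ∧ m ≤ π} =
        {π : Submodule K (Fin 4 → K) | finrank K π = 3 ∧ m ≤ π} := by ext π; simp [and_assoc, and_self]
    rw [e1, e2, count_rank_one_le (Fintype.card K) rfl m hm,
      count_planes (Fintype.card K) rfl m hm]
  · have hsum := Submodule.finrank_sup_add_finrank_inf_eq l m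
    rw [hl, hm] at hsum
    have hinf_le : finrank K (l ⊓ m : Submodule K (Fin 4 → K)) ≤ 2 :=
      hl ▸ Submodule.finrank_mono inf_le_left
    have hinf_ne : finrank K (l ⊓ m : Submodule K (Fin 4 → K)) ≠ 2 := by
      intro h2
      have h1 : l ⊓ m = l := Submodule.eq_of_le_of_finrank_eq inf_le_left (by rw [h2, hl])
      have h2' : l ⊓ m = m := Submodule.eq_of_le_of_finrank_eq inf_le_right (by rw [h2, hm])
      exact hml (by rw [← h2', h1])
    have e1 : ∀ p : Submodule K (Fin 4 → K), (p ≤ l ∧ p ≤ m) ↔ p ≤ l ⊓ m := by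
      intro p; exact le_inf_iff.symm
    have e2 : ∀ π : Submodule K (Fin 4 → K), (l ≤ π ∧ m ≤ π) ↔ l ⊔ m ≤ π := by
      intro π; exact sup_le_iff.symm
    rcases (by omega : finrank K (l ⊓ m : Submodule K (Fin 4 → K)) = 0 ∨
        finrank K (l ⊓ m : Submodule K (Fin 4 → K)) = 1) with h0 | h1
    · have hbot : l ⊓ m = ⊥ := Submodule.finrank_eq_zero.1 h0
      have htop : l ⊔ m = ⊤ := Submodule.eq_top_of_finrank_eq (by omega)
      have eP : {p : Submodule K (Fin 4 → K) | finrank K p = 1 ∧ p ≤ l ∧ p ≤ m} = ∅ := by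
        ext p
        simp only [Set.mem_setOf_eq, Set.mem_empty_iff_false, iff_false, not_and]
        intro hp1 hpl hpm
        have : p ≤ ⊥ := hbot ▸ le_inf hpl hpm
        rw [le_bot_iff] at this
        rw [this, finrank_bot] at hp1
        omega
      have ePl : {π : Submodule K (Fin 4 → K) | finrank K π = 3 ∧ l ≤ π ∧ m ≤ π} = ∅ := by
        ext π
        simp only [Set.mem_setOf_eq, Set.mem_empty_iff_false, iff_false, not_and]
        intro hπ3 hlπ hmπ
        have : (⊤ : Submodule K (Fin 4 → K)) ≤ π := htop ▸ sup_le hlπ hmπ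
        rw [top_le_iff] at this
        rw [this, finrank_top, hV] at hπ3
        omega
      rw [eP, ePl]
    · have eP : {p : Submodule K (Fin 4 → K) | finrank K p = 1 ∧ p ≤ l ∧ p ≤ m} = {l ⊓ m} := by
        ext p
        simp only [Set.mem_setOf_eq, Set.mem_singleton_iff]
        constructor
        · rintro ⟨hp1, hpl, hpm⟩
          exact Submodule.eq_of_le_of_finrank_eq (le_inf hpl hpm) (by rw [hp1, h1])
        · rintro rfl
          exact ⟨h1, inf_le_left, inf_le_right⟩
      have ePl : {π : Submodule K (Fin 4 → K) | finrank K π = 3 ∧ l ≤ π ∧ m ≤ π} = {l ⊔ m} := by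
        ext π
        simp only [Set.mem_setOf_eq, Set.mem_singleton_iff]
        constructor
        · rintro ⟨hπ3, hlπ, hmπ⟩
          exact (Submodule.eq_of_le_of_finrank_eq (sup_le hlπ hmπ) (by omega)).symm
        · rintro rfl
          exact ⟨by omega, le_sup_left, le_sup_right⟩
      rw [eP, ePl]; simp

lemma swap_count {α : Type} [DecidableEq α] (A B : Finset α) (R : α → α → Prop)
    [DecidableRel R] :
    ∑ a ∈ A, (B.filter (fun b => R a b)).card
      = ∑ b ∈ B, (A.filter (fun a => R a b)).card := by
  simp only [Finset.card_filter]
  exact Finset.sum_comm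

lemma sum_two_values {α : Type} (F : Finset α) (f : α → ℕ) (s A : ℕ)
    (h : ∀ x ∈ F, f x = s ∨ f x = A) [DecidablePred (fun x => f x = A)] :
    ∑ x ∈ F, f x =
      (F.filter (fun x => f x = A)).card * A +
        (F.card - (F.filter (fun x => f x = A)).card) * s := by
  rw [← Finset.sum_filter_add_sum_filter_not F (fun x => f x = A)]
  have h1 : ∑ x ∈ F.filter (fun x => f x = A), f x
      = (F.filter (fun x => f x = A)).card * A := by
    rw [Finset.sum_congr rfl (fun x hx => (Finset.mem_filter.1 hx).2),
      Finset.sum_const, smul_eq_mul]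
  have h2 : ∑ x ∈ F.filter (fun x => ¬ f x = A), f x
      = (F.filter (fun x => ¬ f x = A)).card * s := by
    rw [Finset.sum_congr rfl (fun x hx => ?_), Finset.sum_const, smul_eq_mul]
    have hx' := Finset.mem_filter.1 hx
    rcases h x hx'.1 with h' | h'
    · exact h'
    · exact absurd h' hx'.2
  have h3 : (F.filter (fun x => ¬ f x = A)).card
      = F.card - (F.filter (fun x => f x = A)).card := by
    have := Finset.card_filter_add_card_filter_not (s := F) (p := fun x => f x = A)
    omega
  rw [h1, h2, h3]

end AuxPG

set_option maxHeartbeats 2000000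
set_option synthInstance.maxHeartbeats 1000000


/-- For any line `l` of `PG(3,q)`, the number of tangent planes
containing `l` equals the number of black points lying on `l`. -/

theorem stmt_0 (K : Type) [Field K] [Fintype K] (q : ℕ) (hq : Fintype.card K = q)
    (hq_odd : Odd q) (S : Set (Submodule K (Fin 4 → K))) (hS : S ⊆ pgLine K)
    (h1 : P1 K S q) (h2 : P2 K S q) (h2a : P2a K S q) (h2b : P2b K S q) :
    ∀ l ∈ pgLine K,
      {π | IsTangent K S q π ∧ l ≤ π}.ncard =
        {p | IsBlack K S q p ∧ p ≤ l}.ncard := by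
  classical
  intro l hl
  have hl2 : Module.finrank K l = 2 := hl
  obtain ⟨k, hk⟩ := hq_odd
  have hq2 : 2 ≤ q := hq ▸ Fintype.one_lt_card
  have hk1 : 1 ≤ k := by omega
  have hs_eq : q * (q + 1) / 2 = (2 * k + 1) * (k + 1) := by
    have h : q * (q + 1) = ((2 * k + 1) * (k + 1)) * 2 := by rw [hk]; ring
    rw [h, Nat.mul_div_cancel _ (by norm_num)]
  have hsA : q * (q + 1) / 2 < q ^ 2 := by
    rw [hs_eq, hk]; nlinarith
  have hSfin : S.Finite := Set.toFinite _
  have hPfin : {p : Submodule K (Fin 4 → K) | Module.finrank K p = 1 ∧ p ≤ l}.Finite :=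
    Set.toFinite _
  have hEfin : {π : Submodule K (Fin 4 → K) | Module.finrank K π = 3 ∧ l ≤ π}.Finite :=
    Set.toFinite _
  set Sf := hSfin.toFinset with hSf
  set Pf := hPfin.toFinset with hPf
  set Ef := hEfin.toFinset with hEf
  -- Step 1: lines through a point of l, as a filter of Sf
  have step1 : ∀ p ∈ Pf, (linesThru K S p).ncard = (Sf.filter (fun m => p ≤ m)).card := by
    intro p _
    have hcoe : (↑(Sf.filter (fun m => p ≤ m)) : Set (Submodule K (Fin 4 → K)))
        = linesThru K S p := by
      ext m
      simp [linesThru, hSf, Set.Finite.mem_toFinset, Set.mem_setOf_eq]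
    rw [← hcoe, Set.ncard_coe_finset]
  -- Step 4: lines in a plane through l, as a filter of Sf
  have step4 : ∀ π ∈ Ef, (linesIn K S π).ncard = (Sf.filter (fun m => m ≤ π)).card := by
    intro π _
    have hcoe : (↑(Sf.filter (fun m => m ≤ π)) : Set (Submodule K (Fin 4 → K)))
        = linesIn K S π := by
      ext m
      simp [linesIn, hSf, Set.Finite.mem_toFinset, Set.mem_setOf_eq]
    rw [← hcoe, Set.ncard_coe_finset]
  -- Step 3: per-line fiber equality
  have step3 : ∀ m ∈ Sf, (Pf.filter (fun p => p ≤ m)).card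
      = (Ef.filter (fun π => m ≤ π)).card := by
    intro m hm
    have hm2 : Module.finrank K m = 2 := hS (hSfin.mem_toFinset.1 hm)
    have hc1 : (↑(Pf.filter (fun p => p ≤ m)) : Set (Submodule K (Fin 4 → K)))
        = {p : Submodule K (Fin 4 → K) | Module.finrank K p = 1 ∧ p ≤ l ∧ p ≤ m} := by
      ext p
      simp [hPf, Set.Finite.mem_toFinset, and_assoc]
    have hc2 : (↑(Ef.filter (fun π => m ≤ π)) : Set (Submodule K (Fin 4 → K)))
        = {π : Submodule K (Fin 4 → K) | Module.finrank K π = 3 ∧ l ≤ π ∧ m ≤ π} := by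
      ext π
      simp [hEf, Set.Finite.mem_toFinset, and_assoc]
    rw [← Set.ncard_coe_finset, ← Set.ncard_coe_finset, hc1, hc2]
    exact fiber_eq l m hl2 hm2
  -- The double counting identity
  have hsum : ∑ p ∈ Pf, (linesThru K S p).ncard = ∑ π ∈ Ef, (linesIn K S π).ncard := by
    rw [Finset.sum_congr rfl step1, Finset.sum_congr rfl step4,
      swap_count Pf Sf (· ≤ ·), Finset.sum_congr rfl step3,
      swap_count Sf Ef (· ≤ ·)]
  -- cardinalities of Pf and Ef
  have hPcard : Pf.card = q + 1 := by
    rw [hPf, ← Set.ncard_eq_toFinset_card _ hPfin]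
    exact count_rank_one_le q hq l hl2
  have hEcard : Ef.card = q + 1 := by
    rw [hEf, ← Set.ncard_eq_toFinset_card _ hEfin]
    exact count_planes q hq l hl2
  -- evaluate the two sums
  have hPvals : ∀ p ∈ Pf, (linesThru K S p).ncard = q * (q + 1) / 2 ∨
      (linesThru K S p).ncard = q ^ 2 := by
    intro p hp
    exact h1.1 p (hPfin.mem_toFinset.1 hp).1
  have hEvals : ∀ π ∈ Ef, (linesIn K S π).ncard = q * (q + 1) / 2 ∨
      (linesIn K S π).ncard = q ^ 2 := by
    intro π hπ
    exact h2 π (hEfin.mem_toFinset.1 hπ).1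
  have hPsum := sum_two_values Pf (fun p => (linesThru K S p).ncard)
    (q * (q + 1) / 2) (q ^ 2) hPvals
  have hEsum := sum_two_values Ef (fun π => (linesIn K S π).ncard)
    (q * (q + 1) / 2) (q ^ 2) hEvals
  set b := (Pf.filter (fun p => (linesThru K S p).ncard = q ^ 2)).card with hb
  set t := (Ef.filter (fun π => (linesIn K S π).ncard = q ^ 2)).card with ht
  -- identify the goal sets with these filters
  have hgoal1 : {π | IsTangent K S q π ∧ l ≤ π}.ncard = t := by
    rw [ht, ← Set.ncard_coe_finset]
    congr 1
    ext π
    simp only [Finset.coe_filter, Set.mem_setOf_eq, hEf, Set.Finite.mem_toFinset,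
      IsTangent, pgPlane]
    tauto
  have hgoal2 : {p | IsBlack K S q p ∧ p ≤ l}.ncard = b := by
    rw [hb, ← Set.ncard_coe_finset]
    congr 1
    ext p
    simp only [Finset.coe_filter, Set.mem_setOf_eq, hPf, Set.Finite.mem_toFinset,
      IsBlack, pgPoint]
    tauto
  rw [hgoal1, hgoal2]
  -- final arithmetic
  have hble : b ≤ q + 1 := hPcard ▸ Finset.card_filter_le _ _
  have htle : t ≤ q + 1 := hEcard ▸ Finset.card_filter_le _ _
  rw [hPsum, hEsum, hPcard, hEcard] at hsum
  have key : ∀ c ≤ q + 1, c * q ^ 2 + (q + 1 - c) * (q * (q + 1) / 2)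
      = c * (q ^ 2 - q * (q + 1) / 2) + (q + 1) * (q * (q + 1) / 2) := by
    intro c hc
    have e1 : c * q ^ 2 = c * (q ^ 2 - q * (q + 1) / 2) + c * (q * (q + 1) / 2) := by
      rw [← Nat.mul_add, Nat.sub_add_cancel hsA.le]
    have e2 : c * (q * (q + 1) / 2) + (q + 1 - c) * (q * (q + 1) / 2)
        = (q + 1) * (q * (q + 1) / 2) := by
      rw [← Nat.add_mul, Nat.add_sub_cancel' hc]
    omega
  rw [key b hble, key t htle] at hsum
  have hmul : t * (q ^ 2 - q * (q + 1) / 2) = b * (q ^ 2 - q * (q + 1) / 2) := by omega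
  exact Nat.eq_of_mul_eq_mul_right (Nat.sub_pos_of_lt hsA) hmul
end

section
/- There exists at least one tangent plane and at least one secant plane in PG(3,q). -/
open Submodule Set

section Aux

open Module

variable {K : Type} [Field K] [Fintype K]

instance : Finite (Submodule K (Fin 4 → K)) :=
  Finite.of_injective (fun W => (W : Set (Fin 4 → K))) SetLike.coe_injective

/-- Number of 1-dimensional subspaces inside a 2-dimensional subspace is `q + 1`. -/
lemma ncard_points_le_of_finrank_two (U : Submodule K (Fin 4 → K))
    (hU : Module.finrank K ↥U = 2) :
    {p | p ∈ pgPoint K ∧ p ≤ U}.ncard = Fintype.card K + 1 := by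
  classical
  haveI : Fintype (Fin 4 → K) := inferInstance
  haveI := Fintype.ofFinite (Submodule K (Fin 4 → K))
  set q := Fintype.card K with hqdef
  have hq1 : 1 < q := Fintype.one_lt_card
  -- the finset of nonzero vectors of U
  set A : Finset (Fin 4 → K) :=
    Finset.univ.filter (fun v => v ∈ U ∧ v ≠ 0) with hAdef
  have memA : ∀ v, v ∈ A ↔ v ∈ U ∧ v ≠ 0 := by
    intro v; simp [hAdef]
  -- the card of a submodule of finrank n is q ^ n
  have cardSub : ∀ (W : Submodule K (Fin 4 → K)),
      (Finset.univ.filter (fun v => v ∈ W)).card = q ^ (Module.finrank K ↥W) := by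
    intro W
    have : Fintype.card ↥W = (Finset.univ.filter (fun v => v ∈ W)).card :=
      Fintype.card_of_subtype _ (by simp)
    rw [← this, card_eq_pow_finrank (K := K)]
  have hAcard : A.card = q ^ 2 - 1 := by
    have h0 : (0 : Fin 4 → K) ∈ Finset.univ.filter (fun v => v ∈ U) := by
      simp [U.zero_mem]
    have hAe : A = (Finset.univ.filter (fun v => v ∈ U)).erase 0 := by
      ext v
      simp only [memA, Finset.mem_erase, Finset.mem_filter, Finset.mem_univ, true_and]
      tauto
    rw [hAe, Finset.card_erase_of_mem h0, cardSub U, hU]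
  -- the image of A under span
  set F : Finset (Submodule K (Fin 4 → K)) :=
    A.image (fun v => Submodule.span K {v}) with hFdef
  have memF : ∀ p, p ∈ F ↔ p ∈ pgPoint K ∧ p ≤ U := by
    intro p
    constructor
    · intro hp
      obtain ⟨v, hv, rfl⟩ := Finset.mem_image.mp hp
      obtain ⟨hvU, hv0⟩ := (memA v).mp hv
      refine ⟨finrank_span_singleton hv0, ?_⟩
      rw [Submodule.span_le, Set.singleton_subset_iff]; exact hvU
    · rintro ⟨hp1, hpU⟩
      have hpbot : p ≠ ⊥ := by
        intro h
        simp only [pgPoint, Set.mem_setOf_eq, h, finrank_bot] at hp1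
        exact absurd hp1 (by norm_num)
      obtain ⟨v, hvp, hv0⟩ := p.ne_bot_iff.mp hpbot
      have hsp : Submodule.span K {v} = p := by
        apply Submodule.eq_of_le_of_finrank_eq
        · rw [Submodule.span_le, Set.singleton_subset_iff]; exact hvp
        · rw [finrank_span_singleton hv0, hp1]
      refine Finset.mem_image.mpr ⟨v, (memA v).mpr ⟨hpU hvp, hv0⟩, hsp⟩
  -- each fiber has q - 1 elements
  have fiber : ∀ p ∈ F, (A.filter (fun v => Submodule.span K {v} = p)).card = q - 1 := by
    intro p hp
    obtain ⟨hp1, hpU⟩ := (memF p).mp hp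
    have h0 : (0 : Fin 4 → K) ∈ Finset.univ.filter (fun v => v ∈ p) := by
      simp [p.zero_mem]
    have he : A.filter (fun v => Submodule.span K {v} = p) =
        (Finset.univ.filter (fun v => v ∈ p)).erase 0 := by
      ext v
      simp only [Finset.mem_filter, Finset.mem_erase, Finset.mem_univ, true_and, memA]
      constructor
      · rintro ⟨⟨hvU, hv0⟩, hsp⟩
        exact ⟨hv0, hsp ▸ Submodule.mem_span_singleton_self v⟩
      · rintro ⟨hv0, hvp⟩
        have hsp : Submodule.span K {v} = p := by
          apply Submodule.eq_of_le_of_finrank_eq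
          · rw [Submodule.span_le, Set.singleton_subset_iff]; exact hvp
          · rw [finrank_span_singleton hv0, hp1]
        exact ⟨⟨hpU hvp, hv0⟩, hsp⟩
    rw [he, Finset.card_erase_of_mem h0, cardSub p, hp1, pow_one]
  -- double counting
  have hsum : A.card = F.card * (q - 1) := by
    rw [Finset.card_eq_sum_card_image (fun v => Submodule.span K {v}) A]
    rw [← hFdef, Finset.sum_congr rfl fiber, Finset.sum_const, smul_eq_mul]
  have hFcard : F.card = q + 1 := by
    have hmul : F.card * (q - 1) = (q + 1) * (q - 1) := by
      rw [← hsum, hAcard]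
      have h1q : 1 ≤ q := hq1.le
      zify [h1q, Nat.one_le_two_pow, show 1 ≤ q ^ 2 from Nat.one_le_pow _ _ (by omega)]
      ring
    exact Nat.eq_of_mul_eq_mul_right (by omega) hmul
  rw [← hFcard]
  rw [Set.ncard_eq_toFinset_card']
  congr 1
  ext p
  simp [memF p]

/-- The duality correspondence on subspaces of `K^4`. -/
noncomputable def phiE (K : Type) [Field K] :
    Submodule K (Fin 4 → K) ≃ Submodule K (Fin 4 → K) :=
  (Subspace.orderIsoFiniteDimensional (K := K) (V := Fin 4 → K)).toEquiv.trans
    (OrderDual.ofDual.trans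
      (Submodule.orderIsoMapComap ((Pi.basisFun K (Fin 4)).toDualEquiv.symm)).toEquiv)

lemma phiE_apply (W : Submodule K (Fin 4 → K)) :
    phiE K W = (W.dualAnnihilator).map
      ((Pi.basisFun K (Fin 4)).toDualEquiv.symm : Module.Dual K (Fin 4 → K) →ₗ[K] (Fin 4 → K)) := by
  rfl

lemma finrank_phiE (W : Submodule K (Fin 4 → K)) :
    Module.finrank K ↥(phiE K W) + Module.finrank K ↥W = 4 := by
  rw [phiE_apply]
  rw [LinearEquiv.finrank_map_eq]
  have h1 : Module.finrank K ↥W.dualAnnihilator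
      = Module.finrank K ((Fin 4 → K) ⧸ W) :=
    (Subspace.quotEquivAnnihilator W).finrank_eq.symm
  rw [h1, Submodule.finrank_quotient_add_finrank, Module.finrank_fin_fun]

lemma phiE_le_iff (W W' : Submodule K (Fin 4 → K)) :
    phiE K W ≤ phiE K W' ↔ W' ≤ W := by
  rw [phiE_apply, phiE_apply]
  rw [Submodule.map_le_map_iff_of_injective
    (f := ((Pi.basisFun K (Fin 4)).toDualEquiv.symm :
      Module.Dual K (Fin 4 → K) →ₗ[K] (Fin 4 → K)))
    ((Pi.basisFun K (Fin 4)).toDualEquiv.symm.injective)]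
  exact Subspace.dualAnnihilator_le_dualAnnihilator_iff

/-- Via duality, planes through a line are as numerous as points on a 2-dim subspace. -/
lemma ncard_planes_ge_of_finrank_two (l : Submodule K (Fin 4 → K))
    (hl : Module.finrank K ↥l = 2) :
    {π | π ∈ pgPlane K ∧ l ≤ π}.ncard = Fintype.card K + 1 := by
  have himg : {p | p ∈ pgPoint K ∧ p ≤ phiE K l}
      = (phiE K) '' {π | π ∈ pgPlane K ∧ l ≤ π} := by
    ext p
    constructor
    · rintro ⟨hp1, hple⟩
      obtain ⟨π, rfl⟩ := (phiE K).surjective p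
      refine ⟨π, ⟨?_, ?_⟩, rfl⟩
      · have := finrank_phiE (K := K) π
        simp only [pgPoint, Set.mem_setOf_eq] at hp1
        simp only [pgPlane, Set.mem_setOf_eq]
        omega
      · exact (phiE_le_iff π l).mp hple
    · rintro ⟨π, ⟨hπ3, hlπ⟩, rfl⟩
      have := finrank_phiE (K := K) π
      simp only [pgPlane, Set.mem_setOf_eq] at hπ3
      exact ⟨by simp only [pgPoint, Set.mem_setOf_eq]; omega,
        (phiE_le_iff π l).mpr hlπ⟩
  have hU2 : Module.finrank K ↥(phiE K l) = 2 := by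
    have := finrank_phiE (K := K) l
    omega
  rw [← ncard_points_le_of_finrank_two (phiE K l) hU2, himg,
    Set.ncard_image_of_injective _ (phiE K).injective]

/-- There are as many planes as points. -/
lemma ncard_pgPlane_eq : (pgPlane K).ncard = (pgPoint K).ncard := by
  have himg : pgPoint K = (phiE K) '' (pgPlane K) := by
    ext p
    constructor
    · intro hp1
      obtain ⟨π, rfl⟩ := (phiE K).surjective p
      have := finrank_phiE (K := K) π
      simp only [pgPoint, Set.mem_setOf_eq] at hp1
      exact ⟨π, by simp only [pgPlane, Set.mem_setOf_eq]; omega, rfl⟩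
    · rintro ⟨π, hπ3, rfl⟩
      have := finrank_phiE (K := K) π
      simp only [pgPlane, Set.mem_setOf_eq] at hπ3
      simp only [pgPoint, Set.mem_setOf_eq]; omega
  rw [himg, Set.ncard_image_of_injective _ (phiE K).injective]

/-- Double counting point-line (or plane-line) incidences. -/
lemma sum_incidence (S P : Set (Submodule K (Fin 4 → K))) (count : ℕ)
    (r : Submodule K (Fin 4 → K) → Submodule K (Fin 4 → K) → Prop)
    (hcount : ∀ l ∈ S, {p | p ∈ P ∧ r p l}.ncard = count) :
    ∑ p ∈ (Set.toFinite P).toFinset, {l | l ∈ S ∧ r p l}.ncard = S.ncard * count := by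
  classical
  have h1 : ∀ p, {l | l ∈ S ∧ r p l}.ncard
      = ((Set.toFinite S).toFinset.bipartiteAbove r p).card := by
    intro p
    rw [Set.ncard_eq_toFinset_card _ (Set.toFinite _)]
    congr 1
    ext l
    simp [Finset.bipartiteAbove, Set.Finite.mem_toFinset, Set.mem_setOf_eq]
  calc ∑ p ∈ (Set.toFinite P).toFinset, {l | l ∈ S ∧ r p l}.ncard
      = ∑ p ∈ (Set.toFinite P).toFinset,
          ((Set.toFinite S).toFinset.bipartiteAbove r p).card :=
        Finset.sum_congr rfl (fun p _ => h1 p)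
    _ = ∑ l ∈ (Set.toFinite S).toFinset,
          ((Set.toFinite P).toFinset.bipartiteBelow r l).card :=
        Finset.sum_card_bipartiteAbove_eq_sum_card_bipartiteBelow r
    _ = ∑ _l ∈ (Set.toFinite S).toFinset, count := by
        refine Finset.sum_congr rfl (fun l hl => ?_)
        rw [← hcount l ((Set.toFinite S).mem_toFinset.mp hl),
          Set.ncard_eq_toFinset_card _ (Set.toFinite _)]
        congr 1
        ext p
        simp [Finset.bipartiteBelow, Set.Finite.mem_toFinset, Set.mem_setOf_eq]
    _ = S.ncard * count := by
        rw [Finset.sum_const, smul_eq_mul, Set.ncard_eq_toFinset_card _ (Set.toFinite S)]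

/-- Splitting a sum of a two-valued function. -/
lemma sum_two_valued (T : Finset (Submodule K (Fin 4 → K)))
    (f : Submodule K (Fin 4 → K) → ℕ) (a b : ℕ) (hab : a < b)
    (hf : ∀ x ∈ T, f x = a ∨ f x = b) :
    ∑ x ∈ T, f x = T.card * a + (T.filter (fun x => f x = b)).card * (b - a) := by
  classical
  have hcongr : ∀ x ∈ T, f x = a + (if f x = b then b - a else 0) := by
    intro x hx
    rcases hf x hx with h | h
    · rw [h, if_neg (by omega), add_zero]
    · rw [h, if_pos rfl]; omega
  rw [Finset.sum_congr rfl hcongr, Finset.sum_add_distrib, Finset.sum_const, smul_eq_mul]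
  congr 1
  rw [← Finset.sum_filter, Finset.sum_const, smul_eq_mul]

end Aux

/-- There exists at least one tangent plane and at least one
secant plane. -/
theorem stmt_1 (K : Type) [Field K] [Fintype K] (q : ℕ) (hq : Fintype.card K = q)
    (hq_odd : Odd q) (S : Set (Submodule K (Fin 4 → K))) (hS : S ⊆ pgLine K)
    (h1 : P1 K S q) (h2 : P2 K S q) (h2a : P2a K S q) (h2b : P2b K S q) :
    (∃ π, IsTangent K S q π) ∧ (∃ π, IsSecant K S q π) := by
  classical
  subst hq
  set q := Fintype.card K with hqdef
  obtain ⟨m, hm⟩ := hq_odd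
  have hq2 : 1 < q := Fintype.one_lt_card
  have hm1 : 1 ≤ m := by omega
  have hdiv : q * (q + 1) / 2 = q * (m + 1) := by
    rw [hm, show (2 * m + 1) * ((2 * m + 1) + 1) = 2 * ((2 * m + 1) * (m + 1)) by ring,
      Nat.mul_div_cancel_left _ (by norm_num : 0 < 2)]
  have hlt : q * (q + 1) / 2 < q ^ 2 := by
    rw [hdiv, hm]; nlinarith
  obtain ⟨hall, ⟨w, hw, hwdeg⟩, ⟨bp, hbp, hbpdeg⟩⟩ := h1
  set Pfin := (Set.toFinite (pgPoint K)).toFinset with hPfin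
  set Qfin := (Set.toFinite (pgPlane K)).toFinset with hQfin
  -- two incidence counts
  have hsum1 : ∑ p ∈ Pfin, (linesThru K S p).ncard = S.ncard * (q + 1) := by
    exact sum_incidence S (pgPoint K) (q + 1) (fun p l => p ≤ l)
      (fun l hl => ncard_points_le_of_finrank_two l (hS hl))
  have hsum2 : ∑ π ∈ Qfin, (linesIn K S π).ncard = S.ncard * (q + 1) := by
    exact sum_incidence S (pgPlane K) (q + 1) (fun π l => l ≤ π)
      (fun l hl => ncard_planes_ge_of_finrank_two l (hS hl))
  -- split both sums
  have hsplit1 : ∑ p ∈ Pfin, (linesThru K S p).ncard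
      = Pfin.card * (q * (q + 1) / 2)
        + (Pfin.filter (fun p => (linesThru K S p).ncard = q ^ 2)).card
          * (q ^ 2 - q * (q + 1) / 2) :=
    sum_two_valued Pfin _ _ _ hlt
      (fun p hp => hall p ((Set.toFinite _).mem_toFinset.mp hp))
  have hsplit2 : ∑ π ∈ Qfin, (linesIn K S π).ncard
      = Qfin.card * (q * (q + 1) / 2)
        + (Qfin.filter (fun π => (linesIn K S π).ncard = q ^ 2)).card
          * (q ^ 2 - q * (q + 1) / 2) :=
    sum_two_valued Qfin _ _ _ hlt
      (fun π hπ => h2 π ((Set.toFinite _).mem_toFinset.mp hπ))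
  have hNN : Qfin.card = Pfin.card := by
    rw [← Set.ncard_eq_toFinset_card _ (Set.toFinite _),
      ← Set.ncard_eq_toFinset_card _ (Set.toFinite _)]
    exact ncard_pgPlane_eq
  set Bfin := Pfin.filter (fun p => (linesThru K S p).ncard = q ^ 2) with hBfin
  set Tfin := Qfin.filter (fun π => (linesIn K S π).ncard = q ^ 2) with hTfin
  have hBT : Bfin.card = Tfin.card := by
    have heq : Pfin.card * (q * (q + 1) / 2) + Bfin.card * (q ^ 2 - q * (q + 1) / 2)
        = Pfin.card * (q * (q + 1) / 2) + Tfin.card * (q ^ 2 - q * (q + 1) / 2) := by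
      rw [← hsplit1, hsum1, ← hNN, ← hsplit2, hsum2]
    exact Nat.eq_of_mul_eq_mul_right (by omega) (Nat.add_left_cancel heq)
  -- the black point gives a tangent plane
  have hBpos : 0 < Bfin.card := by
    refine Finset.card_pos.mpr ⟨bp, ?_⟩
    rw [hBfin, Finset.mem_filter]
    exact ⟨(Set.toFinite _).mem_toFinset.mpr hbp, hbpdeg⟩
  have htang : ∃ π, IsTangent K S q π := by
    obtain ⟨π, hπ⟩ := Finset.card_pos.mp (hBT ▸ hBpos)
    rw [hTfin, Finset.mem_filter] at hπ
    exact ⟨π, (Set.toFinite _).mem_toFinset.mp hπ.1, hπ.2⟩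
  -- the white point gives a secant plane
  have hBlt : Bfin.card < Pfin.card := by
    refine Finset.card_lt_card ?_
    rw [Finset.ssubset_iff_subset_ne]
    refine ⟨Finset.filter_subset _ _, fun hEq => ?_⟩
    have hwB : w ∈ Bfin := hEq ▸ (Set.toFinite _).mem_toFinset.mpr hw
    rw [hBfin, Finset.mem_filter] at hwB
    rw [hwdeg] at hwB
    omega
  have hTlt : Tfin.card < Qfin.card := by rw [← hBT, hNN]; exact hBlt
  have hsec : ∃ π, IsSecant K S q π := by
    have hss : Tfin ⊂ Qfin := by
      rw [Finset.ssubset_iff_subset_ne]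
      exact ⟨Finset.filter_subset _ _, fun hEq => by rw [hEq] at hTlt; omega⟩
    obtain ⟨π, hπQ, hπT⟩ := Finset.exists_of_ssubset hss
    have hπpl : π ∈ pgPlane K := (Set.toFinite _).mem_toFinset.mp hπQ
    have hπnot : ¬ (linesIn K S π).ncard = q ^ 2 := by
      intro hc
      exact hπT (Finset.mem_filter.mpr ⟨hπQ, hc⟩)
    rcases h2 π hπpl with hc | hc
    · exact ⟨π, hπpl, hc⟩
    · exact absurd hc hπnot
  exact ⟨htang, hsec⟩
end

section
/- Every line contained in a tangent plane contains at least one black point. -/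
set_option synthInstance.maxHeartbeats 1000000
set_option maxHeartbeats 1000000


open Submodule Set

section AuxLemmas

variable {K : Type} [Field K]

private lemma aux_finrank_comap_mkQ {V : Type} [AddCommGroup V] [Module K V]
    [FiniteDimensional K V] {W σ : Submodule K V} (h : W ≤ σ) :
    Module.finrank K ↥σ = Module.finrank K ↥(σ.map W.mkQ) + Module.finrank K ↥W := by
  have h1 := LinearMap.finrank_range_add_finrank_ker (W.mkQ.domRestrict σ)
  rw [LinearMap.range_domRestrict] at h1
  have h2 : LinearMap.ker (W.mkQ.domRestrict σ) = W.comap σ.subtype := by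
    ext x
    simp [LinearMap.mem_ker, Submodule.Quotient.mk_eq_zero, Submodule.mem_comap]
  rw [h2] at h1
  have h3 : Module.finrank K ↥(W.comap σ.subtype) = Module.finrank K ↥W :=
    (Submodule.comapSubtypeEquivOfLe h).finrank_eq
  omega

private lemma aux_ncard_dim_one {M M₂ : Type} [AddCommGroup M] [Module K M]
    [AddCommGroup M₂] [Module K M₂] (e : M ≃ₗ[K] M₂) :
    {p : Submodule K M | Module.finrank K ↥p = 1}.ncard
      = {p : Submodule K M₂ | Module.finrank K ↥p = 1}.ncard := by
  have hinv : ∀ p' : Submodule K M₂,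
      (p'.map (e.symm : M₂ →ₗ[K] M)).map (e : M →ₗ[K] M₂) = p' := by
    intro p'
    rw [← Submodule.map_comp]
    simp
  have himg : {p : Submodule K M₂ | Module.finrank K ↥p = 1}
      = (Submodule.map (e : M →ₗ[K] M₂)) '' {p : Submodule K M | Module.finrank K ↥p = 1} := by
    ext p'
    simp only [Set.mem_image, Set.mem_setOf_eq]
    constructor
    · intro h
      refine ⟨p'.map (e.symm : M₂ →ₗ[K] M), ?_, hinv p'⟩
      rw [LinearEquiv.finrank_map_eq]
      exact h
    · rintro ⟨p, hp, rfl⟩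
      rw [LinearEquiv.finrank_map_eq]
      exact hp
  have hinj : Function.Injective (Submodule.map (e : M →ₗ[K] M₂)) :=
    Submodule.map_injective_of_injective e.injective
  rw [himg, Set.ncard_image_of_injOn hinj.injOn]

private lemma aux_card_points_eq_card_planes [Fintype K]
    (W : Submodule K (Fin 4 → K)) (hW : Module.finrank K ↥W = 2) :
    {p : Submodule K (Fin 4 → K) | Module.finrank K ↥p = 1 ∧ p ≤ W}.ncard
      = {σ : Submodule K (Fin 4 → K) | Module.finrank K ↥σ = 3 ∧ W ≤ σ}.ncard := by
  have hV : Module.finrank K (Fin 4 → K) = 4 := Module.finrank_fin_fun K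
  have hQ : Module.finrank K ((Fin 4 → K) ⧸ W) = 2 := by
    have := Submodule.finrank_quotient_add_finrank W
    omega
  have hA : {p : Submodule K (Fin 4 → K) | Module.finrank K ↥p = 1 ∧ p ≤ W}
      = (Submodule.map W.subtype) '' {p : Submodule K ↥W | Module.finrank K ↥p = 1} := by
    ext p
    simp only [Set.mem_image, Set.mem_setOf_eq]
    constructor
    · rintro ⟨h1, h2⟩
      refine ⟨p.comap W.subtype, ?_, ?_⟩
      · rw [(Submodule.comapSubtypeEquivOfLe h2).finrank_eq]
        exact h1
      · rw [Submodule.map_comap_subtype]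
        exact inf_eq_right.mpr h2
    · rintro ⟨p', h1, rfl⟩
      exact ⟨by rw [Submodule.finrank_map_subtype_eq]; exact h1,
        Submodule.map_subtype_le _ _⟩
  have hB : {σ : Submodule K (Fin 4 → K) | Module.finrank K ↥σ = 3 ∧ W ≤ σ}
      = (Submodule.comap W.mkQ) ''
        {σ' : Submodule K ((Fin 4 → K) ⧸ W) | Module.finrank K ↥σ' = 1} := by
    ext σ
    simp only [Set.mem_image, Set.mem_setOf_eq]
    constructor
    · rintro ⟨h1, h2⟩
      refine ⟨σ.map W.mkQ, ?_, ?_⟩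
      · have := aux_finrank_comap_mkQ (K := K) h2
        omega
      · rw [Submodule.comap_map_mkQ]
        exact sup_eq_right.mpr h2
    · rintro ⟨σ', h1, rfl⟩
      have hle : W ≤ Submodule.comap W.mkQ σ' := by
        intro x hx
        have : W.mkQ x = 0 := (Submodule.Quotient.mk_eq_zero W).mpr hx
        simp [Submodule.mem_comap, this]
      have hmap : (Submodule.comap W.mkQ σ').map W.mkQ = σ' :=
        Submodule.map_comap_eq_of_surjective W.mkQ_surjective σ'
      refine ⟨?_, hle⟩
      have := aux_finrank_comap_mkQ (K := K) hle
      rw [hmap] at this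
      omega
  have hinjA : Set.InjOn (Submodule.map W.subtype)
      {p : Submodule K ↥W | Module.finrank K ↥p = 1} :=
    (Submodule.map_injective_of_injective (Submodule.injective_subtype W)).injOn
  have hinjB : Set.InjOn (Submodule.comap W.mkQ)
      {σ' : Submodule K ((Fin 4 → K) ⧸ W) | Module.finrank K ↥σ' = 1} :=
    (Submodule.comap_injective_of_surjective W.mkQ_surjective).injOn
  rw [hA, hB, Set.ncard_image_of_injOn hinjA, Set.ncard_image_of_injOn hinjB]
  exact aux_ncard_dim_one (LinearEquiv.ofFinrankEq _ _ (by rw [hW, hQ]))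

private lemma aux_line_count [Fintype K]
    (l m : Submodule K (Fin 4 → K)) (hl : Module.finrank K ↥l = 2)
    (hm : Module.finrank K ↥m = 2) :
    {p : Submodule K (Fin 4 → K) | Module.finrank K ↥p = 1 ∧ p ≤ l ∧ p ≤ m}.ncard
      = {σ : Submodule K (Fin 4 → K) | Module.finrank K ↥σ = 3 ∧ l ≤ σ ∧ m ≤ σ}.ncard := by
  have hV : Module.finrank K (Fin 4 → K) = 4 := Module.finrank_fin_fun K
  have hsupinf := Submodule.finrank_sup_add_finrank_inf_eq l m
  have hinfle : Module.finrank K ↥(l ⊓ m) ≤ 2 := hl ▸ Submodule.finrank_mono inf_le_left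
  have hd : Module.finrank K ↥(l ⊓ m) = 0 ∨ Module.finrank K ↥(l ⊓ m) = 1 ∨
      Module.finrank K ↥(l ⊓ m) = 2 := by omega
  rcases hd with hd | hd | hd
  · -- skew lines: both sides are empty
    have hbot : l ⊓ m = ⊥ := Submodule.finrank_eq_zero.mp hd
    have htop : l ⊔ m = ⊤ := Submodule.eq_top_of_finrank_eq (by omega)
    have hA : {p : Submodule K (Fin 4 → K) |
        Module.finrank K ↥p = 1 ∧ p ≤ l ∧ p ≤ m} = ∅ := by
      ext p
      simp only [Set.mem_setOf_eq, Set.mem_empty_iff_false, iff_false, not_and]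
      rintro h1 h2 h3
      have : p ≤ ⊥ := hbot ▸ le_inf h2 h3
      rw [le_bot_iff.mp this] at h1
      simp at h1
    have hB : {σ : Submodule K (Fin 4 → K) |
        Module.finrank K ↥σ = 3 ∧ l ≤ σ ∧ m ≤ σ} = ∅ := by
      ext σ
      simp only [Set.mem_setOf_eq, Set.mem_empty_iff_false, iff_false, not_and]
      rintro h1 h2 h3
      have : (⊤ : Submodule K (Fin 4 → K)) ≤ σ := htop ▸ sup_le h2 h3
      rw [top_le_iff.mp this, finrank_top] at h1
      omega
    rw [hA, hB]
  · -- lines meeting in a point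
    have hsup : Module.finrank K ↥(l ⊔ m) = 3 := by omega
    have hA : {p : Submodule K (Fin 4 → K) |
        Module.finrank K ↥p = 1 ∧ p ≤ l ∧ p ≤ m} = {l ⊓ m} := by
      ext p
      simp only [Set.mem_setOf_eq, Set.mem_singleton_iff]
      constructor
      · rintro ⟨h1, h2, h3⟩
        exact Submodule.eq_of_le_of_finrank_le (le_inf h2 h3) (by omega)
      · rintro rfl
        exact ⟨hd, inf_le_left, inf_le_right⟩
    have hB : {σ : Submodule K (Fin 4 → K) |
        Module.finrank K ↥σ = 3 ∧ l ≤ σ ∧ m ≤ σ} = {l ⊔ m} := by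
      ext σ
      simp only [Set.mem_setOf_eq, Set.mem_singleton_iff]
      constructor
      · rintro ⟨h1, h2, h3⟩
        exact (Submodule.eq_of_le_of_finrank_le (sup_le h2 h3) (by omega)).symm
      · rintro rfl
        exact ⟨hsup, le_sup_left, le_sup_right⟩
    rw [hA, hB, Set.ncard_singleton, Set.ncard_singleton]
  · -- equal lines
    have h1 : l ⊓ m = l := Submodule.eq_of_le_of_finrank_le inf_le_left (by omega)
    have h2 : l ⊓ m = m := Submodule.eq_of_le_of_finrank_le inf_le_right (by omega)
    have hml : m = l := h2 ▸ h1
    subst hml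
    simp only [and_self_iff]
    have := aux_card_points_eq_card_planes m hm
    convert this using 3 <;> · ext x; tauto
  
private lemma aux_double_count {α β : Type} [DecidableEq α] [DecidableEq β]
    (A : Finset α) (B : Finset β) (r : α → β → Prop) [∀ a b, Decidable (r a b)] :
    ∑ a ∈ A, (B.filter (fun b => r a b)).card
      = ∑ b ∈ B, (A.filter (fun a => r a b)).card := by
  have h1 : ∀ a, (B.filter (fun b => r a b)).card
      = ∑ b ∈ B, if r a b then 1 else 0 := fun a => (Finset.sum_boole _ _).symm
  have h2 : ∀ b, (A.filter (fun a => r a b)).card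
      = ∑ a ∈ A, if r a b then 1 else 0 := fun b => (Finset.sum_boole _ _).symm
  simp only [h1, h2]
  exact Finset.sum_comm

end AuxLemmas

/-- Every line contained in a tangent plane contains at least one
black point. -/
theorem stmt_2 (K : Type) [Field K] [Fintype K] (q : ℕ) (hq : Fintype.card K = q)
    (hq_odd : Odd q) (S : Set (Submodule K (Fin 4 → K))) (hS : S ⊆ pgLine K)
    (h1 : P1 K S q) (h2 : P2 K S q) (h2a : P2a K S q) (h2b : P2b K S q) :
    ∀ π, IsTangent K S q π → ∀ l ∈ pgLine K, l ≤ π →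
      ∃ p, IsBlack K S q p ∧ p ≤ l := by
  classical
  intro π hπ l hl hlπ
  by_contra hcon
  push_neg at hcon
  have hfinSub : Finite (Submodule K (Fin 4 → K)) :=
    Finite.of_injective (fun W => (W : Set (Fin 4 → K))) SetLike.coe_injective
  have hl2 : Module.finrank K ↥l = 2 := hl
  have hq2 : 2 ≤ q := hq ▸ Fintype.one_lt_card
  obtain ⟨k, hk⟩ := hq_odd
  set s := q * (q + 1) / 2 with hs_def
  have hs_lt : s < q ^ 2 := by
    have h1 : s = q * (k + 1) := by
      rw [hs_def, hk]
      rw [show (2 * k + 1) * (2 * k + 1 + 1) = ((2 * k + 1) * (k + 1)) * 2 by ring]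
      exact Nat.mul_div_cancel _ (by norm_num)
    rw [h1, pow_two]
    exact mul_lt_mul_of_pos_left (by omega) (by omega)
  have hSfin : S.Finite := Set.toFinite S
  set Sf := hSfin.toFinset with hSf_def
  have hPfin : {p : Submodule K (Fin 4 → K) |
      Module.finrank K ↥p = 1 ∧ p ≤ l}.Finite := Set.toFinite _
  set Pf := hPfin.toFinset with hPf_def
  have hQfin : {σ : Submodule K (Fin 4 → K) |
      Module.finrank K ↥σ = 3 ∧ l ≤ σ}.Finite := Set.toFinite _
  set Qf := hQfin.toFinset with hQf_def
  have hN : ∀ p : Submodule K (Fin 4 → K),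
      (linesThru K S p).ncard = (Sf.filter (fun m => p ≤ m)).card := by
    intro p
    rw [← Set.ncard_coe_finset]
    congr 1
    ext m
    simp [linesThru, hSf_def, hSfin.mem_toFinset, and_comm]
  have hC : ∀ σ : Submodule K (Fin 4 → K),
      (linesIn K S σ).ncard = (Sf.filter (fun m => m ≤ σ)).card := by
    intro σ
    rw [← Set.ncard_coe_finset]
    congr 1
    ext m
    simp [linesIn, hSf_def, hSfin.mem_toFinset, and_comm]
  have hPcard : ∀ m : Submodule K (Fin 4 → K),
      (Pf.filter (fun p => p ≤ m)).card
        = {p : Submodule K (Fin 4 → K) |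
            Module.finrank K ↥p = 1 ∧ p ≤ l ∧ p ≤ m}.ncard := by
    intro m
    rw [← Set.ncard_coe_finset]
    congr 1
    ext p
    simp [hPf_def, hPfin.mem_toFinset, and_assoc]
  have hQcard : ∀ m : Submodule K (Fin 4 → K),
      (Qf.filter (fun σ => m ≤ σ)).card
        = {σ : Submodule K (Fin 4 → K) |
            Module.finrank K ↥σ = 3 ∧ l ≤ σ ∧ m ≤ σ}.ncard := by
    intro m
    rw [← Set.ncard_coe_finset]
    congr 1
    ext σ
    simp [hQf_def, hQfin.mem_toFinset, and_assoc]
  have main : ∑ p ∈ Pf, (linesThru K S p).ncard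
      = ∑ σ ∈ Qf, (linesIn K S σ).ncard := by
    calc ∑ p ∈ Pf, (linesThru K S p).ncard
        = ∑ p ∈ Pf, (Sf.filter (fun m => p ≤ m)).card :=
          Finset.sum_congr rfl fun p _ => hN p
      _ = ∑ m ∈ Sf, (Pf.filter (fun p => p ≤ m)).card :=
          aux_double_count Pf Sf (fun p m => p ≤ m)
      _ = ∑ m ∈ Sf, (Qf.filter (fun σ => m ≤ σ)).card := by
          refine Finset.sum_congr rfl fun m hm => ?_
          have hm2 : Module.finrank K ↥m = 2 := hS (hSfin.mem_toFinset.mp hm)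
          rw [hPcard m, hQcard m]
          exact aux_line_count l m hl2 hm2
      _ = ∑ σ ∈ Qf, (Sf.filter (fun m => m ≤ σ)).card :=
          aux_double_count Sf Qf (fun m σ => m ≤ σ)
      _ = ∑ σ ∈ Qf, (linesIn K S σ).ncard :=
          Finset.sum_congr rfl fun σ _ => (hC σ).symm
  have hPs : ∀ p ∈ Pf, (linesThru K S p).ncard = s := by
    intro p hp
    have hp' := hPfin.mem_toFinset.mp hp
    have hpg : p ∈ pgPoint K := hp'.1
    rcases h1.1 p hpg with h | h
    · exact h
    · exact absurd hp'.2 (hcon p ⟨hpg, h⟩)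
  have hL : ∑ p ∈ Pf, (linesThru K S p).ncard = Pf.card * s := by
    calc ∑ p ∈ Pf, (linesThru K S p).ncard = ∑ _p ∈ Pf, s :=
          Finset.sum_congr rfl hPs
      _ = Pf.card * s := by rw [Finset.sum_const, smul_eq_mul]
  have hπQ : π ∈ Qf := hQfin.mem_toFinset.mpr ⟨hπ.1, hlπ⟩
  have hlow : ∀ σ ∈ Qf.erase π, s ≤ (linesIn K S σ).ncard := by
    intro σ hσ
    have hσ' := hQfin.mem_toFinset.mp (Finset.mem_of_mem_erase hσ)
    rcases h2 σ hσ'.1 with h | h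
    · exact h.ge
    · rw [h]; exact hs_lt.le
  have hR : (Qf.erase π).card * s + q ^ 2 ≤ ∑ σ ∈ Qf, (linesIn K S σ).ncard := by
    rw [← Finset.add_sum_erase Qf _ hπQ]
    have hπval : (linesIn K S π).ncard = q ^ 2 := hπ.2
    have hlb : (Qf.erase π).card * s ≤ ∑ σ ∈ Qf.erase π, (linesIn K S σ).ncard := by
      simpa [smul_eq_mul] using Finset.card_nsmul_le_sum (Qf.erase π) _ s hlow
    omega
  have hcards : Pf.card = Qf.card := by
    have := aux_card_points_eq_card_planes l hl2
    rwa [Set.ncard_eq_toFinset_card _ hPfin, Set.ncard_eq_toFinset_card _ hQfin] at this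
  have hce : (Qf.erase π).card = Qf.card - 1 := Finset.card_erase_of_mem hπQ
  have key : (Qf.card - 1) * s + q ^ 2 ≤ Qf.card * s := by
    calc (Qf.card - 1) * s + q ^ 2 = (Qf.erase π).card * s + q ^ 2 := by rw [hce]
      _ ≤ ∑ σ ∈ Qf, (linesIn K S σ).ncard := hR
      _ = ∑ p ∈ Pf, (linesThru K S p).ncard := main.symm
      _ = Pf.card * s := hL
      _ = Qf.card * s := by rw [hcards]
  obtain ⟨n, hn⟩ : ∃ n, Qf.card = n + 1 :=
    ⟨Qf.card - 1, by
      have : 0 < Qf.card := Finset.card_pos.mpr ⟨π, hπQ⟩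
      omega⟩
  rw [hn] at key
  simp only [Nat.add_sub_cancel, add_mul, one_mul] at key
  linarith
end

section
/- Every black point of PG(3,q) is contained in at least one tangent plane. -/
open Submodule Set

section AuxLemmas
open Module
set_option linter.unusedSectionVars false
variable {K : Type} [Field K] {M : Type}

variable {K : Type} [Field K] {M : Type} [AddCommGroup M] [Module K M] [FiniteDimensional K M]

lemma finrank_eq_map_mkQ_add {l W : Submodule K M} (h : l ≤ W) :
    finrank K W = finrank K (W.map l.mkQ) + finrank K l := by
  have hrn := LinearMap.finrank_range_add_finrank_ker (l.mkQ.comp W.subtype)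
  have hr : LinearMap.range (l.mkQ.comp W.subtype) = W.map l.mkQ := by
    rw [LinearMap.range_comp, Submodule.range_subtype]
  have hk : LinearMap.ker (l.mkQ.comp W.subtype) = (l.comap W.subtype) := by
    rw [LinearMap.ker_comp, Submodule.ker_mkQ]
  rw [hr, hk] at hrn
  rw [← hrn, (Submodule.comapSubtypeEquivOfLe h).finrank_eq]

lemma ncard_sups_eq_quot (l : Submodule K M) (k : ℕ) :
    {W : Submodule K M | l ≤ W ∧ finrank K W = finrank K l + k}.ncard
      = {U : Submodule K (M ⧸ l) | finrank K U = k}.ncard := by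
  have hinj : Set.InjOn (Submodule.map l.mkQ)
      {W : Submodule K M | l ≤ W ∧ finrank K W = finrank K l + k} := by
    intro W1 h1 W2 h2 he
    have e1 : Submodule.comap l.mkQ (W1.map l.mkQ) = W1 := by
      rw [Submodule.comap_map_eq, Submodule.ker_mkQ, sup_eq_left.2 h1.1]
    have e2 : Submodule.comap l.mkQ (W2.map l.mkQ) = W2 := by
      rw [Submodule.comap_map_eq, Submodule.ker_mkQ, sup_eq_left.2 h2.1]
    rw [← e1, ← e2, he]
  have himg : (Submodule.map l.mkQ) '' {W : Submodule K M | l ≤ W ∧ finrank K W = finrank K l + k}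
      = {U : Submodule K (M ⧸ l) | finrank K U = k} := by
    ext U
    constructor
    · rintro ⟨W, ⟨hle, hrk⟩, rfl⟩
      have := finrank_eq_map_mkQ_add hle
      simp only [Set.mem_setOf_eq]
      omega
    · intro hU
      refine ⟨U.comap l.mkQ, ⟨?_, ?_⟩, ?_⟩
      · intro x hx
        show l.mkQ x ∈ U
        rw [Submodule.mkQ_apply, (Submodule.Quotient.mk_eq_zero l).mpr hx]
        exact U.zero_mem
      · have hle : l ≤ U.comap l.mkQ := by
          intro x hx
          show l.mkQ x ∈ U
          rw [Submodule.mkQ_apply, (Submodule.Quotient.mk_eq_zero l).mpr hx]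
          exact U.zero_mem
        have := finrank_eq_map_mkQ_add hle
        rw [Submodule.map_comap_eq_of_surjective (Submodule.mkQ_surjective l)] at this
        simp only [Set.mem_setOf_eq] at hU
        omega
      · exact Submodule.map_comap_eq_of_surjective (Submodule.mkQ_surjective l) U
  rw [← himg, Set.ncard_image_of_injOn hinj]

lemma card_onedim [Fintype K] [Fintype M] :
    (Fintype.card K - 1) * {W : Submodule K M | finrank K W = 1}.ncard
      = Fintype.card K ^ (finrank K M) - 1 := by
  classical
  haveI : Finite (Submodule K M) := Finite.of_injective _ SetLike.coe_injective
  haveI : Fintype (Submodule K M) := Fintype.ofFinite _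
  set q := Fintype.card K with hq
  set T : Finset M := Finset.univ.filter (fun v => v ≠ 0) with hT
  set B : Finset (Submodule K M) := Finset.univ.filter (fun W => finrank K W = 1) with hB
  have hTcard : T.card = q ^ (finrank K M) - 1 := by
    rw [hT, Finset.filter_ne' Finset.univ 0, Finset.card_erase_of_mem (Finset.mem_univ 0),
      Finset.card_univ, card_eq_pow_finrank (K := K)]
  have hmaps : ∀ v ∈ T, Submodule.span K {v} ∈ B := by
    intro v hv
    rw [hT, Finset.mem_filter] at hv
    rw [hB, Finset.mem_filter]
    exact ⟨Finset.mem_univ _, finrank_span_singleton hv.2⟩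
  have hsum := Finset.card_eq_sum_card_fiberwise hmaps
  have hfiber : ∀ W ∈ B, (T.filter (fun v => Submodule.span K {v} = W)).card = q - 1 := by
    intro W hW
    rw [hB, Finset.mem_filter] at hW
    have he : T.filter (fun v => Submodule.span K {v} = W)
        = (Finset.univ.filter (fun v => v ∈ W)).erase 0 := by
      ext v
      simp only [hT, Finset.mem_filter, Finset.mem_erase, Finset.mem_univ, true_and,
        Finset.filter_filter]
      constructor
      · rintro ⟨hv0, hsp⟩
        exact ⟨hv0, hsp ▸ Submodule.mem_span_singleton_self v⟩
      · rintro ⟨hv0, hvW⟩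
        refine ⟨hv0, Submodule.eq_of_le_of_finrank_eq ?_ ?_⟩
        · rwa [Submodule.span_singleton_le_iff_mem]
        · rw [finrank_span_singleton hv0, hW.2]
    rw [he, Finset.card_erase_of_mem, ← Fintype.card_subtype]
    · have hcW : Fintype.card ↥W = q := by
        rw [card_eq_pow_finrank (K := K) (V := ↥W), hW.2, pow_one]
      omega
    · simp only [Finset.mem_filter, Finset.mem_univ, true_and]; exact W.zero_mem
  rw [Finset.sum_congr rfl hfiber, Finset.sum_const, smul_eq_mul] at hsum
  have hncard : {W : Submodule K M | finrank K W = 1}.ncard = B.card := by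
    rw [Set.ncard_eq_toFinset_card']
    congr 1
    ext W
    simp [hB]
  rw [hncard, Nat.mul_comm, ← hsum, hTcard]

lemma ncard_onedim_of_rank_two [Fintype K] [Fintype M] (h2 : finrank K M = 2) :
    {W : Submodule K M | finrank K W = 1}.ncard = Fintype.card K + 1 := by
  have hc := card_onedim (K := K) (M := M)
  rw [h2] at hc
  have hq2 : 2 ≤ Fintype.card K := Fintype.one_lt_card
  have h1 : Fintype.card K ^ 2 - 1 = (Fintype.card K - 1) * (Fintype.card K + 1) := by
    cases' Nat.exists_eq_add_of_le hq2 with r hr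
    have e1 : (2 + r) ^ 2 = r * r + 4 * r + 4 := by ring
    have e2 : (2 + r - 1) * (2 + r + 1) = r * r + 4 * r + 3 := by
      have : 2 + r - 1 = r + 1 := by omega
      rw [this]; ring
    rw [hr]; omega
  rw [h1] at hc
  exact Nat.eq_of_mul_eq_mul_left (by omega) hc

lemma ncard_finrank_eq_of_equiv {M₂ : Type} [AddCommGroup M₂] [Module K M₂]
    (e : M ≃ₗ[K] M₂) (k : ℕ) :
    {U : Submodule K M | finrank K U = k}.ncard
      = {U : Submodule K M₂ | finrank K U = k}.ncard := by
  have hinj : Set.InjOn (Submodule.map (e : M →ₗ[K] M₂))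
      {U : Submodule K M | finrank K U = k} :=
    fun U1 _ U2 _ h => Submodule.map_injective_of_injective e.injective h
  have himg : (Submodule.map (e : M →ₗ[K] M₂)) '' {U : Submodule K M | finrank K U = k}
      = {U : Submodule K M₂ | finrank K U = k} := by
    ext U'
    constructor
    · rintro ⟨U, hU, rfl⟩
      simpa [LinearEquiv.finrank_map_eq e U] using hU
    · intro hU'
      refine ⟨Submodule.comap (e : M →ₗ[K] M₂) U', ?_, ?_⟩
      · have := LinearEquiv.finrank_map_eq e (Submodule.comap (e : M →ₗ[K] M₂) U')
        rw [Submodule.map_comap_eq_of_surjective (f := (e : M →ₗ[K] M₂)) e.surjective] at this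
        simp only [Set.mem_setOf_eq] at hU' ⊢
        rw [← hU', ← this]
      · exact Submodule.map_comap_eq_of_surjective (f := (e : M →ₗ[K] M₂)) e.surjective U'
  rw [← himg, Set.ncard_image_of_injOn hinj]

section PG
variable [Fintype K]
variable (K) in

lemma finrank_V_aux (K : Type) [Field K] : Module.finrank K (Fin 4 → K) = 4 := Module.finrank_fin_fun K


lemma planes_thru_line {l : Submodule K (Fin 4 → K)} (hl : l ∈ pgLine K) :
    {π | π ∈ pgPlane K ∧ l ≤ π}.ncard = Fintype.card K + 1 := by
  have hl2 : finrank K l = 2 := hl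
  have hset : {π | π ∈ pgPlane K ∧ l ≤ π}
      = {W : Submodule K (Fin 4 → K) | l ≤ W ∧ finrank K W = finrank K l + 1} := by
    ext π
    simp only [Set.mem_setOf_eq, pgPlane, hl2]
    tauto
  rw [hset, ncard_sups_eq_quot]
  have hqd : finrank K ((Fin 4 → K) ⧸ l) = 2 := by
    have h := Submodule.finrank_quotient_add_finrank l
    rw [finrank_V_aux K] at h
    omega
  haveI : Fintype ((Fin 4 → K) ⧸ l) := Fintype.ofFinite _
  exact ncard_onedim_of_rank_two hqd

lemma plane_of_point_line {x l : Submodule K (Fin 4 → K)} (hx : x ∈ pgPoint K)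
    (hl : l ∈ pgLine K) (hxl : ¬ x ≤ l) :
    {π | π ∈ pgPlane K ∧ x ≤ π ∧ l ≤ π}.ncard = 1 := by
  have hx1 : finrank K x = 1 := hx
  have hl2 : finrank K l = 2 := hl
  have hbot : x ⊓ l = ⊥ := by
    by_contra hne
    have hlt : x ⊓ l = x := by
      rcases lt_or_eq_of_le (inf_le_left : x ⊓ l ≤ x) with h | h
      · exfalso
        have := Submodule.finrank_lt_finrank_of_lt h
        rw [hx1] at this
        interval_cases h' : finrank K ↥(x ⊓ l)
        exact hne ((Submodule.finrank_eq_zero).1 h')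
      · exact h
    exact hxl (hlt ▸ inf_le_right)
  have hsup : finrank K ↥(x ⊔ l) = 3 := by
    have h := Submodule.finrank_sup_add_finrank_inf_eq x l
    rw [hbot, finrank_bot, hx1, hl2] at h
    omega
  have hset : {π | π ∈ pgPlane K ∧ x ≤ π ∧ l ≤ π} = {x ⊔ l} := by
    ext π
    simp only [Set.mem_setOf_eq, Set.mem_singleton_iff]
    constructor
    · rintro ⟨hπ, hxπ, hlπ⟩
      have h3 : finrank K π = 3 := hπ
      exact (Submodule.eq_of_le_of_finrank_eq (sup_le hxπ hlπ) (by rw [hsup, h3])).symm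
    · rintro rfl
      exact ⟨hsup, le_sup_left, le_sup_right⟩
  rw [hset, Set.ncard_singleton]

lemma planes_thru_point_eq {p w : Submodule K (Fin 4 → K)} (hp : p ∈ pgPoint K)
    (hw : w ∈ pgPoint K) :
    {π | π ∈ pgPlane K ∧ p ≤ π}.ncard = {π | π ∈ pgPlane K ∧ w ≤ π}.ncard := by
  have hset : ∀ x : Submodule K (Fin 4 → K), x ∈ pgPoint K →
      {π | π ∈ pgPlane K ∧ x ≤ π}
        = {W : Submodule K (Fin 4 → K) | x ≤ W ∧ finrank K W = finrank K x + 2} := by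
    intro x hx
    have hx1 : finrank K x = 1 := hx
    ext π
    simp only [Set.mem_setOf_eq, pgPlane, hx1]
    tauto
  have hquot : ∀ x : Submodule K (Fin 4 → K), x ∈ pgPoint K →
      finrank K ((Fin 4 → K) ⧸ x) = 3 := by
    intro x hx
    have hx1 : finrank K x = 1 := hx
    have h := Submodule.finrank_quotient_add_finrank x
    rw [finrank_V_aux K] at h
    omega
  obtain ⟨e⟩ := FiniteDimensional.nonempty_linearEquiv_of_finrank_eq
    ((hquot p hp).trans (hquot w hw).symm)
  rw [hset p hp, hset w hw, ncard_sups_eq_quot, ncard_sups_eq_quot]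
  exact ncard_finrank_eq_of_equiv e 2

end PG


noncomputable instance pgSubmoduleFintype (K : Type) [Field K] [Fintype K] :
    Fintype (Submodule K (Fin 4 → K)) :=
  haveI : Finite (Submodule K (Fin 4 → K)) :=
    Finite.of_injective (fun W => (W : Set (Fin 4 → K))) SetLike.coe_injective
  Fintype.ofFinite _

open scoped Classical in
lemma sum_linesIn {K : Type} [Field K] [Fintype K]
    (S : Set (Submodule K (Fin 4 → K))) (hS : S ⊆ pgLine K)
    {x : Submodule K (Fin 4 → K)} (hx : x ∈ pgPoint K) :
    ∑ π ∈ {π | π ∈ pgPlane K ∧ x ≤ π}.toFinset, (linesIn K S π).ncard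
      = S.ncard + Fintype.card K * (linesThru K S x).ncard := by
  classical
  set q := Fintype.card K with hqdef
  set P : Finset (Submodule K (Fin 4 → K)) := {π | π ∈ pgPlane K ∧ x ≤ π}.toFinset with hP
  have hterm : ∀ π, (linesIn K S π).ncard = (S.toFinset.filter (fun l => l ≤ π)).card := by
    intro π
    rw [Set.ncard_eq_toFinset_card']
    congr 1
    ext l
    rw [Set.mem_toFinset]; simp [linesIn]
  have hswap : ∑ π ∈ P, (S.toFinset.filter (fun l => l ≤ π)).card
      = ∑ l ∈ S.toFinset, (P.filter (fun π => l ≤ π)).card := by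
    simp only [Finset.card_filter]
    exact Finset.sum_comm
  have hcount : ∀ l ∈ S.toFinset, (P.filter (fun π => l ≤ π)).card
      = if x ≤ l then q + 1 else 1 := by
    intro l hl
    rw [Set.mem_toFinset] at hl
    have hlLine := hS hl
    by_cases hxl : x ≤ l
    · rw [if_pos hxl]
      have he : P.filter (fun π => l ≤ π) = {π | π ∈ pgPlane K ∧ l ≤ π}.toFinset := by
        ext π
        simp only [hP, Finset.mem_filter, Set.mem_toFinset, Set.mem_setOf_eq]
        exact ⟨fun h => ⟨h.1.1, h.2⟩, fun h => ⟨⟨h.1, le_trans hxl h.2⟩, h.2⟩⟩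
      rw [he, ← Set.ncard_eq_toFinset_card']
      exact planes_thru_line hlLine
    · rw [if_neg hxl]
      have he : P.filter (fun π => l ≤ π) = {π | π ∈ pgPlane K ∧ x ≤ π ∧ l ≤ π}.toFinset := by
        ext π
        simp only [hP, Finset.mem_filter, Set.mem_toFinset, Set.mem_setOf_eq]
        tauto
      rw [he, ← Set.ncard_eq_toFinset_card']
      exact plane_of_point_line hx hlLine hxl
  have hthru : (linesThru K S x).ncard = (S.toFinset.filter (fun l => x ≤ l)).card := by
    rw [Set.ncard_eq_toFinset_card']
    congr 1
    ext l
    rw [Set.mem_toFinset]; simp [linesThru]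
  have hSncard : S.ncard = S.toFinset.card := Set.ncard_eq_toFinset_card' S
  calc ∑ π ∈ P, (linesIn K S π).ncard
      = ∑ l ∈ S.toFinset, (P.filter (fun π => l ≤ π)).card := by
        rw [Finset.sum_congr rfl (fun π _ => hterm π)]; exact hswap
    _ = ∑ l ∈ S.toFinset, (if x ≤ l then q + 1 else 1) :=
        Finset.sum_congr rfl hcount
    _ = S.ncard + q * (linesThru K S x).ncard := by
        rw [Finset.sum_ite, Finset.sum_const, Finset.sum_const, smul_eq_mul, smul_eq_mul,
          hthru, hSncard]
        have hle : (S.toFinset.filter (fun l => x ≤ l)).card ≤ S.toFinset.card :=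
          Finset.card_filter_le _ _
        have hsplit : (S.toFinset.filter (fun l => x ≤ l)).card
            + (S.toFinset.filter (fun l => ¬ x ≤ l)).card = S.toFinset.card :=
          Finset.card_filter_add_card_filter_not _
        have hexp : (S.toFinset.filter (fun l => x ≤ l)).card * (q + 1)
            = q * (S.toFinset.filter (fun l => x ≤ l)).card
              + (S.toFinset.filter (fun l => x ≤ l)).card := by ring
        omega

end AuxLemmas

/-- Every black point is contained in at least one tangent
plane. -/
theorem stmt_3 (K : Type) [Field K] [Fintype K] (q : ℕ) (hq : Fintype.card K = q)
    (hq_odd : Odd q) (S : Set (Submodule K (Fin 4 → K))) (hS : S ⊆ pgLine K)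
    (h1 : P1 K S q) (h2 : P2 K S q) (h2a : P2a K S q) (h2b : P2b K S q) :
    ∀ p, IsBlack K S q p → ∃ π, IsTangent K S q π ∧ p ≤ π := by
  classical
  intro p hp
  by_contra hno
  push_neg at hno
  obtain ⟨_, ⟨w, hwpt, hwcard⟩, _⟩ := h1
  have hq2 : 2 ≤ q := hq ▸ Fintype.one_lt_card
  set m : ℕ := q * (q + 1) / 2 with hm
  have hm2 : 2 * m = q * (q + 1) := by
    rw [hm, Nat.mul_div_cancel']
    exact (Nat.even_mul_succ_self q).two_dvd
  have hqq : q * (q + 1) = q * q + q := by ring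
  have hsq : q ^ 2 = q * q := sq q
  have hqle : q ≤ q * q := Nat.le_mul_of_pos_left q (by omega)
  have hqle2 : 2 * q ≤ q * q := Nat.mul_le_mul_right q (by omega)
  have hmq2 : m ≤ q ^ 2 := by omega
  set Pp : Finset (Submodule K (Fin 4 → K)) := {π | π ∈ pgPlane K ∧ p ≤ π}.toFinset with hPp
  set Pw : Finset (Submodule K (Fin 4 → K)) := {π | π ∈ pgPlane K ∧ w ≤ π}.toFinset with hPw
  have hsump := sum_linesIn S hS hp.1
  have hsumw := sum_linesIn S hS hwpt
  rw [hq, hp.2] at hsump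
  rw [hq, hwcard] at hsumw
  -- every plane through p is secant
  have hsec : ∀ π ∈ Pp, (linesIn K S π).ncard = m := by
    intro π hπ
    rw [hPp, Set.mem_toFinset] at hπ
    rcases h2 π hπ.1 with h | h
    · exact h
    · exact absurd hπ.2 (hno π ⟨hπ.1, h⟩)
  have hsump' : Pp.card * m = S.ncard + q * q ^ 2 := by
    rw [← hsump, Finset.sum_congr rfl hsec, Finset.sum_const, smul_eq_mul]
  have hsumw' : Pw.card * m ≤ S.ncard + q * m := by
    rw [← hsumw]
    rw [show Pw.card * m = ∑ _π ∈ Pw, m by rw [Finset.sum_const, smul_eq_mul]]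
    refine Finset.sum_le_sum fun π hπ => ?_
    rw [hPw, Set.mem_toFinset] at hπ
    rcases h2 π hπ.1 with h | h
    · exact h.ge
    · rw [h]; exact hmq2
  have hcards : Pp.card = Pw.card := by
    rw [hPp, hPw, ← Set.ncard_eq_toFinset_card', ← Set.ncard_eq_toFinset_card']
    exact planes_thru_point_eq hp.1 hwpt
  rw [← hcards, hsump'] at hsumw'
  have hqm : q * q ^ 2 ≤ q * m := by omega
  have hmge : q ^ 2 ≤ m := Nat.le_of_mul_le_mul_left hqm (by omega)
  omega
end

section
/- Let π be a tangent plane. Then exactly q^2+q points of π lie on exactly q lines of S_π; equivalently, there is exactly one point of π (called the pole p_π of π) which lies on no line of S_π. -/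
open Submodule Set

section Aux
open Module

variable {K : Type} [Field K] [Fintype K]


noncomputable instance : Fintype (Submodule K (Fin 4 → K)) :=
  have : Finite (Submodule K (Fin 4 → K)) :=
    Finite.of_injective _ (SetLike.coe_injective (A := Submodule K (Fin 4 → K)))
  Fintype.ofFinite _

omit [Fintype K] in
lemma point_eq_span {p : Submodule K (Fin 4 → K)} (hp : Module.finrank K ↥p = 1)
    {v : Fin 4 → K} (hv : v ∈ p) (hv0 : v ≠ 0) : p = Submodule.span K {v} := by
  have h1 : Submodule.span K {v} ≤ p := by
    rw [Submodule.span_le, Set.singleton_subset_iff]; exact hv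
  exact (Submodule.eq_of_le_of_finrank_eq h1 (by rw [finrank_span_singleton hv0, hp])).symm

lemma card_sub (p : Submodule K (Fin 4 → K)) :
    ((p : Set (Fin 4 → K))).ncard = Fintype.card K ^ (Module.finrank K ↥p) := by
  have : Fintype ↥p := Fintype.ofFinite _
  rw [← Nat.card_coe_set_eq, SetLike.coe_sort_coe, Nat.card_eq_fintype_card,
    card_eq_pow_finrank (K := K)]

lemma point_count (W : Submodule K (Fin 4 → K)) (d : ℕ) (hW : Module.finrank K ↥W = d) :
    {p | p ∈ pgPoint K ∧ p ≤ W}.ncard * (Fintype.card K - 1) = Fintype.card K ^ d - 1 := by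
  classical
  set q := Fintype.card K with hq
  set P : Set (Submodule K (Fin 4 → K)) := {p | p ∈ pgPoint K ∧ p ≤ W} with hP
  set F := P.toFinite.toFinset with hF
  set f : Submodule K (Fin 4 → K) → Finset (Fin 4 → K) :=
    fun p => ((p : Set (Fin 4 → K)) \ {0}).toFinite.toFinset with hf
  have hA : ((W : Set (Fin 4 → K)) \ {0}).toFinite.toFinset = F.biUnion f := by
    ext v
    simp only [Set.Finite.mem_toFinset, Set.mem_diff, Set.mem_singleton_iff,
      Finset.mem_biUnion, hf, hF, hP, Set.mem_setOf_eq, SetLike.mem_coe]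
    constructor
    · rintro ⟨hvW, hv0⟩
      refine ⟨Submodule.span K {v}, ⟨finrank_span_singleton hv0, ?_⟩, ?_, hv0⟩
      · rw [Submodule.span_le, Set.singleton_subset_iff]; exact hvW
      · exact Submodule.mem_span_singleton_self v
    · rintro ⟨p, ⟨_, hpW⟩, hvp, hv0⟩
      exact ⟨hpW hvp, hv0⟩
  have hdisj : ∀ p ∈ F, ∀ p' ∈ F, p ≠ p' → Disjoint (f p) (f p') := by
    intro p hp p' hp' hne
    rw [Finset.disjoint_left]
    intro v hv hv'
    simp only [hf, Set.Finite.mem_toFinset, Set.mem_diff, Set.mem_singleton_iff,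
      SetLike.mem_coe] at hv hv'
    rw [hF, Set.Finite.mem_toFinset, hP] at hp hp'
    exact hne ((point_eq_span hp.1 hv.1 hv.2).trans (point_eq_span hp'.1 hv'.1 hv'.2).symm)
  have hfcard : ∀ p ∈ F, (f p).card = q - 1 := by
    intro p hp
    rw [hF, Set.Finite.mem_toFinset, hP] at hp
    have h0 : (0 : Fin 4 → K) ∈ (p : Set (Fin 4 → K)) := p.zero_mem
    rw [hf, ← Set.ncard_eq_toFinset_card _ (Set.toFinite _),
      Set.ncard_diff_singleton_of_mem h0, card_sub, hp.1, pow_one]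
  have hmain : ((W : Set (Fin 4 → K)) \ {0}).toFinite.toFinset.card = F.card * (q - 1) := by
    rw [hA, Finset.card_biUnion hdisj, Finset.sum_congr rfl hfcard, Finset.sum_const,
      smul_eq_mul]
  rw [← Set.ncard_eq_toFinset_card _ (Set.toFinite _),
    Set.ncard_diff_singleton_of_mem W.zero_mem, card_sub, hW] at hmain
  rw [Set.ncard_eq_toFinset_card _ P.toFinite]
  exact hmain.symm

lemma cube_id (q : ℕ) (h : 1 ≤ q) : (q ^ 2 + q + 1) * (q - 1) = q ^ 3 - 1 := by
  obtain ⟨k, rfl⟩ : ∃ k, q = k + 1 := ⟨q - 1, by omega⟩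
  simp only [Nat.add_sub_cancel]
  exact Nat.eq_sub_of_add_eq (by ring)

lemma square_id (q : ℕ) (h : 1 ≤ q) : (q + 1) * (q - 1) = q ^ 2 - 1 := by
  obtain ⟨k, rfl⟩ : ∃ k, q = k + 1 := ⟨q - 1, by omega⟩
  simp only [Nat.add_sub_cancel]
  exact Nat.eq_sub_of_add_eq (by ring)

end Aux

/-- In a tangent plane `π`, exactly `q^2+q` points lie on exactly
`q` lines of `S_π`; equivalently, there is exactly one point of `π` (the pole)
lying on no line of `S_π`. -/
theorem stmt_4 (K : Type) [Field K] [Fintype K] (q : ℕ) (hq : Fintype.card K = q)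
    (hq_odd : Odd q) (S : Set (Submodule K (Fin 4 → K))) (hS : S ⊆ pgLine K)
    (h1 : P1 K S q) (h2 : P2 K S q) (h2a : P2a K S q) (h2b : P2b K S q) :
    ∀ π, IsTangent K S q π →
      {p | p ∈ pgPoint K ∧ p ≤ π ∧ (pencilS K S p π).ncard = q}.ncard = q ^ 2 + q ∧
      (∃! p, p ∈ pgPoint K ∧ p ≤ π ∧ (pencilS K S p π).ncard = 0) := by
  classical
  intro π hπ
  obtain ⟨hπpl, hπcard⟩ := hπ
  subst hq
  set q := Fintype.card K with hq
  have hq1 : 1 < q := Fintype.one_lt_card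
  -- number of points of the plane π
  set Pts : Set (Submodule K (Fin 4 → K)) := {p | p ∈ pgPoint K ∧ p ≤ π} with hPts
  set FP := Pts.toFinite.toFinset with hFP
  have hFPcard : FP.card = q ^ 2 + q + 1 := by
    have h := point_count π 3 hπpl
    rw [Set.ncard_eq_toFinset_card _ Pts.toFinite] at h
    have hid : (q ^ 2 + q + 1) * (q - 1) = q ^ 3 - 1 := cube_id q (by omega)
    exact Nat.eq_of_mul_eq_mul_right (by omega) (h.trans hid.symm)
  set FL := (linesIn K S π).toFinite.toFinset with hFL
  have hFLcard : FL.card = q ^ 2 := by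
    rw [hFL, ← Set.ncard_eq_toFinset_card]; exact hπcard
  -- pencils as filters of FL
  have hpencil : ∀ p, (pencilS K S p π).ncard = (FL.filter (fun l => p ≤ l)).card := by
    intro p
    rw [Set.ncard_eq_toFinset_card _ (Set.toFinite _)]
    congr 1
    ext l
    simp only [Set.Finite.mem_toFinset, Finset.mem_filter, hFL, Set.Finite.mem_toFinset]
    unfold pencilS linesIn
    simp only [Set.mem_setOf_eq]
    tauto
  -- each line of S in π has q+1 points
  have hlinept : ∀ l ∈ FL, (FP.filter (fun p => p ≤ l)).card = q + 1 := by
    intro l hl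
    rw [hFL, Set.Finite.mem_toFinset] at hl
    obtain ⟨hlS, hlπ⟩ := hl
    have hl2 : Module.finrank K ↥l = 2 := hS hlS
    have hset : (FP.filter (fun p => p ≤ l)) =
        {p | p ∈ pgPoint K ∧ p ≤ l}.toFinite.toFinset := by
      ext p
      simp only [Finset.mem_filter, hFP, Set.Finite.mem_toFinset, hPts, Set.mem_setOf_eq]
      exact ⟨fun ⟨⟨h1, _⟩, h3⟩ => ⟨h1, h3⟩, fun ⟨h1, h3⟩ => ⟨⟨h1, le_trans h3 hlπ⟩, h3⟩⟩
    rw [hset]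
    have h := point_count l 2 hl2
    rw [Set.ncard_eq_toFinset_card _ (Set.toFinite _)] at h
    have hid : (q + 1) * (q - 1) = q ^ 2 - 1 := square_id q (by omega)
    exact Nat.eq_of_mul_eq_mul_right (by omega) (h.trans hid.symm)
  -- double counting of incidences
  have hinc : ∑ p ∈ FP, (pencilS K S p π).ncard = q ^ 2 * (q + 1) := by
    calc ∑ p ∈ FP, (pencilS K S p π).ncard
        = ∑ p ∈ FP, ∑ l ∈ FL, if p ≤ l then 1 else 0 := by
          refine Finset.sum_congr rfl fun p _ => ?_
          rw [hpencil p, Finset.card_filter]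
      _ = ∑ l ∈ FL, ∑ p ∈ FP, if p ≤ l then 1 else 0 := Finset.sum_comm
      _ = ∑ l ∈ FL, (FP.filter (fun p => p ≤ l)).card := by
          refine Finset.sum_congr rfl fun l _ => ?_
          rw [Finset.card_filter]
      _ = ∑ _l ∈ FL, (q + 1) := Finset.sum_congr rfl hlinept
      _ = q ^ 2 * (q + 1) := by rw [Finset.sum_const, hFLcard, smul_eq_mul]
  -- every pencil has 0 or q lines
  have h0q : ∀ p ∈ FP, (pencilS K S p π).ncard = 0 ∨ (pencilS K S p π).ncard = q := by
    intro p hp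
    rw [hFP, Set.Finite.mem_toFinset, hPts, Set.mem_setOf_eq] at hp
    exact h2a π hπpl hπcard p hp.1 hp.2
  set FN := FP.filter (fun p => (pencilS K S p π).ncard = q) with hFNdef
  set FZ := FP.filter (fun p => (pencilS K S p π).ncard = 0) with hFZdef
  have hsum : ∑ p ∈ FP, (pencilS K S p π).ncard = FN.card * q := by
    rw [← Finset.sum_filter_add_sum_filter_not FP (fun p => (pencilS K S p π).ncard = q)]
    have h2 : ∑ p ∈ FP.filter (fun p => ¬ (pencilS K S p π).ncard = q),
        (pencilS K S p π).ncard = 0 := by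
      refine Finset.sum_eq_zero fun p hp => ?_
      rw [Finset.mem_filter] at hp
      rcases h0q p hp.1 with h | h
      · exact h
      · exact absurd h hp.2
    rw [h2, add_zero]
    rw [Finset.sum_congr rfl (fun p hp => (Finset.mem_filter.mp hp).2), Finset.sum_const,
      smul_eq_mul]
  have hFNcard : FN.card = q ^ 2 + q := by
    have h : FN.card * q = (q ^ 2 + q) * q := by
      rw [← hsum, hinc]; ring
    exact Nat.eq_of_mul_eq_mul_right (by omega) h
  have hFZcard : FZ.card = 1 := by
    have hsplit : FZ.card + FN.card = FP.card := by
      rw [hFZdef, hFNdef]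
      have hcongr : FP.filter (fun p => (pencilS K S p π).ncard = q) =
          FP.filter (fun p => ¬ (pencilS K S p π).ncard = 0) := by
        refine Finset.filter_congr fun p hp => ?_
        rcases h0q p hp with h | h <;> simp [h] <;> omega
      rw [hcongr, Finset.card_filter_add_card_filter_not]
    omega
  constructor
  · have hset : {p | p ∈ pgPoint K ∧ p ≤ π ∧ (pencilS K S p π).ncard = q} = ↑FN := by
      ext p
      simp only [Set.mem_setOf_eq, Finset.coe_filter, hFNdef, hFP, Set.Finite.mem_toFinset,
        hPts, Set.mem_setOf_eq]
      tauto
    rw [hset, Set.ncard_coe_finset, hFNcard]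
  · obtain ⟨a, ha⟩ := Finset.card_eq_one.mp hFZcard
    have hamem : a ∈ FZ := by rw [ha]; exact Finset.mem_singleton_self a
    rw [hFZdef, Finset.mem_filter, hFP, Set.Finite.mem_toFinset, hPts,
      Set.mem_setOf_eq] at hamem
    refine ⟨a, ⟨hamem.1.1, hamem.1.2, hamem.2⟩, fun p hp => ?_⟩
    have hpmem : p ∈ FZ := by
      rw [hFZdef, Finset.mem_filter, hFP, Set.Finite.mem_toFinset, hPts, Set.mem_setOf_eq]
      exact ⟨⟨hp.1, hp.2.1⟩, hp.2.2⟩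
    rw [ha, Finset.mem_singleton] at hpmem
    exact hpmem
end

section
/- Let π be a tangent plane with pole p_π. Then the q+1 lines of π that are not in S_π are precisely the lines of π passing through p_π. -/
open Submodule Set

section AuxCounting

variable {K : Type} [Field K] [Fintype K]

lemma aux_natcard (V : Type) [AddCommGroup V] [Module K V] [Module.Finite K V] :
    Nat.card V = Fintype.card K ^ Module.finrank K V := by
  have : Finite V := Module.finite_of_finite K
  cases nonempty_fintype V
  rw [Nat.card_eq_fintype_card, Module.card_eq_pow_finrank (K := K)]

lemma aux_filter_card {α : Type*} [Fintype α] (pr : α → Prop) [DecidablePred pr] :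
    (Finset.univ.filter pr).card = {x | pr x}.ncard := by
  rw [Set.ncard_eq_toFinset_card', Set.toFinset_setOf]

lemma aux_card_mem {V : Type} [AddCommGroup V] [Module K V] [Module.Finite K V] [Fintype V]
    (W : Submodule K V) [DecidablePred (· ∈ W)] :
    (Finset.univ.filter (fun v => v ∈ W)).card = Fintype.card K ^ Module.finrank K ↥W := by
  rw [aux_filter_card, ← Nat.card_coe_set_eq]
  rw [Nat.card_congr (Equiv.subtypeEquivRight (fun x => Iff.rfl : ∀ x : V, x ∈ {v | v ∈ W} ↔ x ∈ W))]
  exact aux_natcard (↥W)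

lemma gen_count {V : Type} [AddCommGroup V] [Module K V] [Module.Finite K V]
    (p : Submodule K V) (k : ℕ) (hk : Module.finrank K ↥p = k) :
    {l : Submodule K V | Module.finrank K ↥l = k + 1 ∧ p ≤ l}.ncard *
      (Fintype.card K ^ (k + 1) - Fintype.card K ^ k) =
    Fintype.card K ^ Module.finrank K V - Fintype.card K ^ k := by
  classical
  have hfinV : Finite V := Module.finite_of_finite K
  cases nonempty_fintype V
  have : Finite (Submodule K V) := Finite.of_injective _ SetLike.coe_injective
  cases nonempty_fintype (Submodule K V)
  set q := Fintype.card K with hq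
  set s : Finset V := Finset.univ.filter (fun v => v ∉ p) with hs
  set t : Finset (Submodule K V) :=
    Finset.univ.filter (fun l => Module.finrank K ↥l = k + 1 ∧ p ≤ l) with ht
  have hspan : ∀ v : V, v ∉ p → Module.finrank K ↥(p ⊔ (K ∙ v)) = k + 1 := by
    intro v hv
    have hv0 : v ≠ 0 := fun h => hv (h ▸ p.zero_mem)
    have hbot : p ⊓ (K ∙ v) = ⊥ := by
      rw [eq_bot_iff]
      intro w hw
      rw [Submodule.mem_inf] at hw
      obtain ⟨hw1, hw2⟩ := hw
      rw [Submodule.mem_span_singleton] at hw2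
      obtain ⟨c, rfl⟩ := hw2
      rcases eq_or_ne c 0 with rfl | hc
      · simp
      · exact absurd ((p.smul_mem_iff hc).mp hw1) hv
    have h := Submodule.finrank_sup_add_finrank_inf_eq p (K ∙ v)
    rw [hbot, finrank_bot, hk, finrank_span_singleton hv0] at h
    omega
  have hmem : ∀ v ∈ s, p ⊔ (K ∙ v) ∈ t := by
    intro v hv
    rw [hs, Finset.mem_filter] at hv
    rw [ht, Finset.mem_filter]
    exact ⟨Finset.mem_univ _, hspan v hv.2, le_sup_left⟩
  have hcount := Finset.card_eq_sum_card_fiberwise hmem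
  have hfiber : ∀ l ∈ t, (s.filter fun v => p ⊔ (K ∙ v) = l).card = q ^ (k + 1) - q ^ k := by
    intro l hl
    rw [ht, Finset.mem_filter] at hl
    obtain ⟨-, hl1, hl2⟩ := hl
    have heq : (s.filter fun v => p ⊔ (K ∙ v) = l)
        = Finset.univ.filter (fun v => v ∈ l) \ Finset.univ.filter (fun v => v ∈ p) := by
      ext v
      simp only [hs, Finset.mem_filter, Finset.mem_univ, true_and, Finset.mem_sdiff]
      constructor
      · rintro ⟨hvp, rfl⟩
        exact ⟨Submodule.mem_sup_right (Submodule.mem_span_singleton_self v), hvp⟩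
      · rintro ⟨hvl, hvp⟩
        refine ⟨hvp, ?_⟩
        have hle : p ⊔ (K ∙ v) ≤ l :=
          sup_le hl2 ((Submodule.span_singleton_le_iff_mem v l).2 hvl)
        exact Submodule.eq_of_le_of_finrank_eq hle (by rw [hspan v hvp, hl1])
    rw [heq, Finset.card_sdiff_of_subset]
    · rw [aux_card_mem, aux_card_mem, hl1, hk]
    · intro v hv
      rw [Finset.mem_filter] at hv ⊢
      exact ⟨Finset.mem_univ _, hl2 hv.2⟩
  have hscard : s.card = q ^ Module.finrank K V - q ^ k := by
    have h1 : s = Finset.univ \ Finset.univ.filter (fun v => v ∈ p) := by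
      ext v
      simp [hs]
    rw [h1, Finset.card_sdiff_of_subset (Finset.filter_subset _ _), Finset.card_univ, aux_card_mem, hk,
      Module.card_eq_pow_finrank (K := K)]
  rw [hcount, Finset.sum_congr rfl hfiber, Finset.sum_const, smul_eq_mul] at hscard
  rw [← aux_filter_card]
  exact hscard

lemma count_points (W : Submodule K (Fin 4 → K)) :
    {x | x ∈ pgPoint K ∧ x ≤ W}.ncard * (Fintype.card K - 1)
      = Fintype.card K ^ Module.finrank K ↥W - 1 := by
  classical
  have himg : {x | x ∈ pgPoint K ∧ x ≤ W} =
      (fun U : Submodule K ↥W => U.map W.subtype) ''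
        {U : Submodule K ↥W | Module.finrank K ↥U = 0 + 1 ∧ ⊥ ≤ U} := by
    ext x
    simp only [Set.mem_image, Set.mem_setOf_eq, bot_le, and_true, pgPoint, zero_add]
    constructor
    · rintro ⟨hx1, hx2⟩
      refine ⟨Submodule.comap W.subtype x, ?_, ?_⟩
      · rw [← Submodule.finrank_map_subtype_eq W, Submodule.map_comap_subtype,
          inf_eq_right.2 hx2]
        exact hx1
      · rw [Submodule.map_comap_subtype]
        exact inf_eq_right.2 hx2
    · rintro ⟨U, hU, rfl⟩
      exact ⟨by rw [Submodule.finrank_map_subtype_eq]; exact hU, Submodule.map_subtype_le _ _⟩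
  rw [himg, Set.ncard_image_of_injective _
    (Submodule.map_injective_of_injective W.injective_subtype)]
  have hg := gen_count (K := K) (⊥ : Submodule K ↥W) 0 (finrank_bot K ↥W)
  simpa using hg

lemma count_points_line (m : Submodule K (Fin 4 → K)) (hm : Module.finrank K ↥m = 2) :
    {x | x ∈ pgPoint K ∧ x ≤ m}.ncard = Fintype.card K + 1 := by
  have hq2 : 2 ≤ Fintype.card K := Fintype.one_lt_card
  set q := Fintype.card K with hq
  have h := count_points m
  rw [hm] at h
  have key : (q + 1) * (q - 1) = q ^ 2 - 1 := by
    have h1 : 1 ≤ q := by omega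
    have h2 : 1 ≤ q ^ 2 := Nat.one_le_pow _ _ (by omega)
    zify [h1, h2]
    ring
  have hpos : 0 < q - 1 := by omega
  exact Nat.eq_of_mul_eq_mul_right hpos (by rw [h, key])

lemma count_points_plane (π : Submodule K (Fin 4 → K)) (hπ : Module.finrank K ↥π = 3) :
    {x | x ∈ pgPoint K ∧ x ≤ π}.ncard = Fintype.card K ^ 2 + Fintype.card K + 1 := by
  have hq2 : 2 ≤ Fintype.card K := Fintype.one_lt_card
  set q := Fintype.card K with hq
  have h := count_points π
  rw [hπ] at h
  have key : (q ^ 2 + q + 1) * (q - 1) = q ^ 3 - 1 := by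
    have h1 : 1 ≤ q := by omega
    have h2 : 1 ≤ q ^ 3 := Nat.one_le_pow _ _ (by omega)
    zify [h1, h2]
    ring
  have hpos : 0 < q - 1 := by omega
  exact Nat.eq_of_mul_eq_mul_right hpos (by rw [h, key])

lemma count_lines_thru (p π : Submodule K (Fin 4 → K)) (hp : Module.finrank K ↥p = 1)
    (hπ3 : Module.finrank K ↥π = 3) (hpπ : p ≤ π) :
    {l | l ∈ pgLine K ∧ l ≤ π ∧ p ≤ l}.ncard = Fintype.card K + 1 := by
  classical
  have hq2 : 2 ≤ Fintype.card K := Fintype.one_lt_card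
  set q := Fintype.card K with hq
  set p' : Submodule K ↥π := Submodule.comap π.subtype p with hp'
  have hmapp' : p'.map π.subtype = p := by
    rw [hp', Submodule.map_comap_subtype]
    exact inf_eq_right.2 hpπ
  have hp'1 : Module.finrank K ↥p' = 1 := by
    rw [← hp, ← hmapp']
    exact (Submodule.finrank_map_subtype_eq π p').symm
  have himg : {l | l ∈ pgLine K ∧ l ≤ π ∧ p ≤ l} =
      (fun U : Submodule K ↥π => U.map π.subtype) ''
        {U : Submodule K ↥π | Module.finrank K ↥U = 1 + 1 ∧ p' ≤ U} := by
    ext l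
    simp only [Set.mem_image, Set.mem_setOf_eq, pgLine]
    constructor
    · rintro ⟨h1, h2, h3⟩
      refine ⟨Submodule.comap π.subtype l, ⟨?_, ?_⟩, ?_⟩
      · rw [← Submodule.finrank_map_subtype_eq π, Submodule.map_comap_subtype,
          inf_eq_right.2 h2]
        omega
      · exact Submodule.comap_mono h3
      · rw [Submodule.map_comap_subtype]
        exact inf_eq_right.2 h2
    · rintro ⟨U, ⟨hU1, hU2⟩, rfl⟩
      refine ⟨by rw [Submodule.finrank_map_subtype_eq]; omega,
        Submodule.map_subtype_le _ _, ?_⟩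
      rw [← hmapp']
      exact Submodule.map_mono hU2
  rw [himg, Set.ncard_image_of_injective _
    (Submodule.map_injective_of_injective π.injective_subtype)]
  have hg := gen_count (K := K) p' 1 hp'1
  rw [hπ3] at hg
  have key : (q + 1) * (q ^ (1 + 1) - q ^ 1) = q ^ 3 - q ^ 1 := by
    have h1 : q ^ 1 ≤ q ^ (1 + 1) := Nat.pow_le_pow_right (by omega) (by omega)
    have h2 : q ^ 1 ≤ q ^ 3 := Nat.pow_le_pow_right (by omega) (by omega)
    zify [h1, h2]
    ring
  have hpos : 0 < q ^ (1 + 1) - q ^ 1 := by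
    have : q ^ 1 < q ^ (1 + 1) := Nat.pow_lt_pow_right (by omega) (by omega)
    omega
  exact Nat.eq_of_mul_eq_mul_right hpos (by rw [hg, key])

lemma pencil_q (S : Set (Submodule K (Fin 4 → K)))
    (hS : S ⊆ pgLine K) (h2a : P2a K S (Fintype.card K)) (π : Submodule K (Fin 4 → K))
    (hπ : π ∈ pgPlane K) (hπt : (linesIn K S π).ncard = Fintype.card K ^ 2)
    (p : Submodule K (Fin 4 → K)) (hp : p ∈ pgPoint K) (hpπ : p ≤ π)
    (hp0 : (pencilS K S p π).ncard = 0) :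
    ∀ x, x ∈ pgPoint K → x ≤ π → x ≠ p → (pencilS K S x π).ncard = Fintype.card K := by
  classical
  have : Finite (Submodule K (Fin 4 → K)) := Finite.of_injective _ SetLike.coe_injective
  cases nonempty_fintype (Submodule K (Fin 4 → K))
  set q := Fintype.card K with hqdef
  have hq2 : 2 ≤ q := Fintype.one_lt_card
  have hπ3 : Module.finrank K ↥π = 3 := hπ
  set P : Finset (Submodule K (Fin 4 → K)) :=
    Finset.univ.filter (fun x => x ∈ pgPoint K ∧ x ≤ π) with hP
  set L : Finset (Submodule K (Fin 4 → K)) :=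
    Finset.univ.filter (fun m => m ∈ linesIn K S π) with hL
  have hLcard : L.card = q ^ 2 := by
    rw [hL, aux_filter_card, Set.setOf_mem_eq]
    exact hπt
  have hpen : ∀ x : Submodule K (Fin 4 → K),
      (pencilS K S x π).ncard = (L.filter fun m => x ≤ m).card := by
    intro x
    rw [hL, Finset.filter_filter, aux_filter_card]
    congr 1
    ext m
    simp only [Set.mem_setOf_eq, pencilS, linesIn]
    tauto
  have hPcard : P.card = q ^ 2 + q + 1 := by
    rw [hP, aux_filter_card]
    exact count_points_plane π hπ3
  have hsum : ∑ x ∈ P, (pencilS K S x π).ncard = q ^ 2 * (q + 1) := by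
    have hlinepts : ∀ m ∈ L, (P.filter fun x => x ≤ m).card = q + 1 := by
      intro m hm
      rw [hL, Finset.mem_filter] at hm
      obtain ⟨-, hmS, hmπ⟩ := hm
      have hm2 : Module.finrank K ↥m = 2 := hS hmS
      have heq : (P.filter fun x => x ≤ m)
          = Finset.univ.filter (fun x => x ∈ pgPoint K ∧ x ≤ m) := by
        ext x
        rw [hP, Finset.filter_filter, Finset.mem_filter, Finset.mem_filter]
        constructor
        · rintro ⟨h0, ⟨h1, h2⟩, h3⟩
          exact ⟨h0, h1, h3⟩
        · rintro ⟨h0, h1, h3⟩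
          exact ⟨h0, ⟨h1, h3.trans hmπ⟩, h3⟩
      rw [heq, aux_filter_card]
      exact count_points_line m hm2
    calc ∑ x ∈ P, (pencilS K S x π).ncard
        = ∑ x ∈ P, (L.filter fun m => x ≤ m).card :=
          Finset.sum_congr rfl (fun x _ => hpen x)
      _ = ∑ m ∈ L, (P.filter fun x => x ≤ m).card := by
          simp_rw [Finset.card_filter]
          exact Finset.sum_comm
      _ = ∑ m ∈ L, (q + 1) := Finset.sum_congr rfl hlinepts
      _ = q ^ 2 * (q + 1) := by rw [Finset.sum_const, hLcard, smul_eq_mul]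
  have hQcard : (P.filter fun x => ¬ (pencilS K S x π).ncard = 0).card * q
      = q ^ 2 * (q + 1) := by
    rw [← hsum, ← Finset.sum_filter_add_sum_filter_not P (fun x => (pencilS K S x π).ncard = 0)]
    have h1 : ∑ x ∈ P.filter (fun x => (pencilS K S x π).ncard = 0),
        (pencilS K S x π).ncard = 0 :=
      Finset.sum_eq_zero (fun x hx => (Finset.mem_filter.mp hx).2)
    have h2 : ∑ x ∈ P.filter (fun x => ¬(pencilS K S x π).ncard = 0),
        (pencilS K S x π).ncard
        = (P.filter fun x => ¬(pencilS K S x π).ncard = 0).card * q := by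
      rw [Finset.sum_congr rfl (fun x hx => ?_), Finset.sum_const, smul_eq_mul]
      obtain ⟨hxP, hx0⟩ := Finset.mem_filter.mp hx
      obtain ⟨-, hx1, hx2⟩ : x ∈ Finset.univ ∧ x ∈ pgPoint K ∧ x ≤ π := by
        rw [hP, Finset.mem_filter] at hxP
        exact ⟨hxP.1, hxP.2⟩
      rcases h2a π hπ hπt x hx1 hx2 with h | h
      · exact absurd h hx0
      · exact h
    rw [h1, h2, zero_add]
  have hQ : (P.filter fun x => ¬(pencilS K S x π).ncard = 0).card = q ^ 2 + q :=
    Nat.eq_of_mul_eq_mul_right (by omega) (hQcard.trans (by ring))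
  have h0card : (P.filter fun x => (pencilS K S x π).ncard = 0).card = 1 := by
    have h := Finset.card_filter_add_card_filter_not
      (s := P) (p := fun x => (pencilS K S x π).ncard = 0)
    omega
  have hpP0 : p ∈ P.filter (fun x => (pencilS K S x π).ncard = 0) := by
    rw [Finset.mem_filter, hP, Finset.mem_filter]
    exact ⟨⟨Finset.mem_univ _, hp, hpπ⟩, hp0⟩
  intro x hx1 hx2 hxp
  rcases h2a π hπ hπt x hx1 hx2 with h | h
  · exfalso
    have hxP0 : x ∈ P.filter (fun x => (pencilS K S x π).ncard = 0) := by
      rw [Finset.mem_filter, hP, Finset.mem_filter]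
      exact ⟨⟨Finset.mem_univ _, hx1, hx2⟩, h⟩
    obtain ⟨a, ha⟩ := Finset.card_eq_one.mp h0card
    rw [ha, Finset.mem_singleton] at hpP0 hxP0
    exact hxp (hxP0.trans hpP0.symm)
  · exact h

end AuxCounting

/-- For a tangent plane `π` with pole `p`, the `q+1` lines of `π`
not in `S_π` are precisely the lines of `π` through `p`. -/
theorem stmt_5 (K : Type) [Field K] [Fintype K] (q : ℕ) (hq : Fintype.card K = q)
    (hq_odd : Odd q) (S : Set (Submodule K (Fin 4 → K))) (hS : S ⊆ pgLine K)
    (h1 : P1 K S q) (h2 : P2 K S q) (h2a : P2a K S q) (h2b : P2b K S q) :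
    ∀ π, IsTangent K S q π →
      ∀ p, p ∈ pgPoint K → p ≤ π → (pencilS K S p π).ncard = 0 →
        {l | l ∈ pgLine K ∧ l ≤ π ∧ l ∉ S} =
            {l | l ∈ pgLine K ∧ l ≤ π ∧ p ≤ l} ∧
        {l | l ∈ pgLine K ∧ l ≤ π ∧ l ∉ S}.ncard = q + 1 := by
  classical
  subst hq
  intro π hπt p hpPt hpπ hp0
  obtain ⟨hπpl, hπcard⟩ := hπt
  set q := Fintype.card K with hqdef
  have hq2 : 2 ≤ q := Fintype.one_lt_card
  have hπ3 : Module.finrank K ↥π = 3 := hπpl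
  have hp1 : Module.finrank K ↥p = 1 := hpPt
  have hfin : Finite (Submodule K (Fin 4 → K)) :=
    Finite.of_injective _ SetLike.coe_injective
  cases nonempty_fintype (Submodule K (Fin 4 → K))
  have key := pencil_q S hS h2a π hπpl hπcard p hpPt hpπ hp0
  have hsetEq : {l | l ∈ pgLine K ∧ l ≤ π ∧ l ∉ S}
      = {l | l ∈ pgLine K ∧ l ≤ π ∧ p ≤ l} := by
    ext l
    simp only [Set.mem_setOf_eq]
    constructor
    · rintro ⟨hl, hlπ, hlS⟩
      refine ⟨hl, hlπ, ?_⟩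
      by_contra hpl
      set L : Finset (Submodule K (Fin 4 → K)) :=
        Finset.univ.filter (fun m => m ∈ linesIn K S π) with hL
      set Pl : Finset (Submodule K (Fin 4 → K)) :=
        Finset.univ.filter (fun x => x ∈ pgPoint K ∧ x ≤ l) with hPl
      have hLcard : L.card = q ^ 2 := by
        rw [hL, aux_filter_card, Set.setOf_mem_eq]
        exact hπcard
      have hl2 : Module.finrank K ↥l = 2 := hl
      have hinf : ∀ m ∈ L, Module.finrank K ↥(m ⊓ l) = 1 ∧ m ⊓ l ≤ l := by
        intro m hm
        rw [hL, Finset.mem_filter] at hm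
        obtain ⟨-, hmS, hmπ⟩ := hm
        have hm2 : Module.finrank K ↥m = 2 := hS hmS
        have hne : l ≠ m := fun h => hlS (h ▸ hmS)
        have hnotle : ¬ l ≤ m := fun h =>
          hne (Submodule.eq_of_le_of_finrank_eq h (by rw [hl2, hm2]))
        have hlt : m < m ⊔ l :=
          lt_of_le_of_ne le_sup_left (fun h => hnotle (le_sup_right.trans_eq h.symm))
        have hsup3 : Module.finrank K ↥(m ⊔ l) = 3 := by
          have hle : m ⊔ l ≤ π := sup_le hmπ hlπ
          have h1 : Module.finrank K ↥(m ⊔ l) ≤ 3 := hπ3 ▸ Submodule.finrank_mono hle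
          have h2 : 2 < Module.finrank K ↥(m ⊔ l) :=
            hm2 ▸ Submodule.finrank_lt_finrank_of_lt hlt
          omega
        have h := Submodule.finrank_sup_add_finrank_inf_eq m l
        rw [hsup3, hm2, hl2] at h
        exact ⟨by omega, inf_le_right⟩
      have hmap : ∀ m ∈ L, m ⊓ l ∈ Pl := by
        intro m hm
        obtain ⟨h1, h2⟩ := hinf m hm
        rw [hPl, Finset.mem_filter]
        exact ⟨Finset.mem_univ _, h1, h2⟩
      have hcount := Finset.card_eq_sum_card_fiberwise hmap
      have hPlcard : Pl.card = q + 1 := by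
        rw [hPl, aux_filter_card]
        exact count_points_line l hl2
      have hfiber : ∀ x ∈ Pl, (L.filter fun m => m ⊓ l = x).card = q := by
        intro x hx
        rw [hPl, Finset.mem_filter] at hx
        obtain ⟨-, hx1, hx2⟩ := hx
        have hxπ : x ≤ π := hx2.trans hlπ
        have hxp : x ≠ p := fun h => hpl (h ▸ hx2)
        have hpenx := key x hx1 hxπ hxp
        have heq : (L.filter fun m => m ⊓ l = x) = (L.filter fun m => x ≤ m) := by
          ext m
          simp only [Finset.mem_filter, and_congr_right_iff]
          intro hm
          constructor
          · rintro rfl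
            exact inf_le_left
          · intro hxm
            have h1 := (hinf m (by rw [hL, Finset.mem_filter]; exact ⟨Finset.mem_univ _, by simpa [hL] using hm⟩)).1
            exact (Submodule.eq_of_le_of_finrank_eq (le_inf hxm hx2)
              (by rw [hx1, h1])).symm
        have hpenfil : (pencilS K S x π).ncard = (L.filter fun m => x ≤ m).card := by
          rw [hL, Finset.filter_filter, aux_filter_card]
          congr 1
          ext m
          simp only [Set.mem_setOf_eq, pencilS, linesIn]
          tauto
        rw [heq, ← hpenfil, hpenx]
      rw [Finset.sum_congr rfl hfiber, Finset.sum_const, smul_eq_mul, hLcard, hPlcard] at hcount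
      have hring : (q + 1) * q = q ^ 2 + q := by ring
      rw [hring] at hcount
      have hlt : q ^ 2 < q ^ 2 + q := Nat.lt_add_of_pos_right (by omega)
      exact absurd hcount (Nat.ne_of_lt hlt)
    · rintro ⟨hl, hlπ, hpl⟩
      refine ⟨hl, hlπ, fun hlS => ?_⟩
      have hmem : l ∈ pencilS K S p π := ⟨hlS, hpl, hlπ⟩
      have hempty : pencilS K S p π = ∅ := (Set.ncard_eq_zero (Set.toFinite _)).mp hp0
      rw [hempty] at hmem
      exact hmem
  exact ⟨hsetEq, by rw [hsetEq]; exact count_lines_thru p π hp1 hπ3 hpπ⟩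
end

section
/- Let π be a secant plane and let l be a line of π with l ∈ S_π. Then the triple (|α(l)|, |β(l)|, |γ(l)|) equals ((q-1)/2, (q-1)/2, 2) or (0, q, 1). -/
open Submodule Set

section Aux
variable {K : Type} [Field K] [Fintype K]

noncomputable local instance inst_s6 : Fintype (Submodule K (Fin 4 → K)) := by
  have : Finite (Submodule K (Fin 4 → K)) :=
    Finite.of_injective (fun W => (W : Set (Fin 4 → K))) SetLike.coe_injective
  exact Fintype.ofFinite _

noncomputable local instance (W : Submodule K (Fin 4 → K)) : Fintype W :=
  Fintype.ofFinite _

example (W : Submodule K (Fin 4 → K)) : Fintype.card W = Fintype.card K ^ Module.finrank K W :=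
  Module.card_eq_pow_finrank

lemma pts_point (p0 : Submodule K (Fin 4 → K)) (h : Module.finrank K p0 = 1) :
    {p | p ∈ pgPoint K ∧ p ≤ p0} = {p0} := by
  ext p
  simp only [Set.mem_setOf_eq, Set.mem_singleton_iff]
  constructor
  · rintro ⟨hp, hle⟩
    exact Submodule.eq_of_le_of_finrank_le hle (by rw [h]; rw [pgPoint, Set.mem_setOf_eq] at hp; omega)
  · rintro rfl
    exact ⟨h, le_rfl⟩

end Aux

section Aux2
variable {K : Type} [Field K] [Fintype K]

noncomputable local instance inst1 : Fintype (Submodule K (Fin 4 → K)) := by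
  have : Finite (Submodule K (Fin 4 → K)) :=
    Finite.of_injective (fun W => (W : Set (Fin 4 → K))) SetLike.coe_injective
  exact Fintype.ofFinite _

noncomputable local instance inst2 (W : Submodule K (Fin 4 → K)) : Fintype W :=
  Fintype.ofFinite _

lemma card_set_of_submodule (W : Submodule K (Fin 4 → K)) :
    ((W : Set (Fin 4 → K))).ncard = Fintype.card K ^ Module.finrank K W := by
  rw [← Nat.card_coe_set_eq]
  have : Nat.card W = Fintype.card K ^ Module.finrank K W := by
    rw [Nat.card_eq_fintype_card]; exact Module.card_eq_pow_finrank
  exact this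

lemma ncard_nonzero_s6 (W : Submodule K (Fin 4 → K)) :
    ((W : Set (Fin 4 → K)) \ {0}).ncard = Fintype.card K ^ Module.finrank K W - 1 := by
  rw [Set.ncard_diff_singleton_of_mem (Submodule.zero_mem W),
    card_set_of_submodule]

lemma pts_line (l : Submodule K (Fin 4 → K)) (h : Module.finrank K l = 2) :
    {p | p ∈ pgPoint K ∧ p ≤ l}.ncard = Fintype.card K + 1 := by
  classical
  set V := Fin 4 → K
  set q := Fintype.card K with hq
  have hq2 : 2 ≤ q := Fintype.one_lt_card
  set s : Set V := (l : Set V) \ {0} with hs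
  set t : Set (Submodule K V) := {p | p ∈ pgPoint K ∧ p ≤ l} with ht
  have hfib : ∀ p ∈ t, (s ∩ {v | span K {v} = p}).ncard = q - 1 := by
    rintro p ⟨hp1, hp2⟩
    have heq : s ∩ {v | span K {v} = p} = (p : Set V) \ {0} := by
      ext v
      simp only [hs, Set.mem_inter_iff, Set.mem_diff, Set.mem_setOf_eq,
        Set.mem_singleton_iff, SetLike.mem_coe]
      constructor
      · rintro ⟨⟨hvl, hv0⟩, hsp⟩
        exact ⟨by rw [← hsp]; exact Submodule.mem_span_singleton_self v, hv0⟩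
      · rintro ⟨hvp, hv0⟩
        refine ⟨⟨hp2 hvp, hv0⟩, ?_⟩
        apply Submodule.eq_of_le_of_finrank_le
        · rwa [Submodule.span_singleton_le_iff_mem]
        · rw [hp1, finrank_span_singleton hv0]
    rw [heq, ncard_nonzero_s6, hp1, pow_one]
  have key : s.ncard = ∑ p ∈ (Set.toFinite t).toFinset, (s ∩ {v | span K {v} = p}).ncard := by
    rw [Set.ncard_eq_toFinset_card s (Set.toFinite s)]
    rw [Finset.card_eq_sum_card_fiberwise (f := fun v => span K ({v} : Set V))
      (t := (Set.toFinite t).toFinset)]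
    · apply Finset.sum_congr rfl
      intro p _
      rw [Set.ncard_eq_toFinset_card _ (Set.toFinite _)]
      congr 1
      ext v
      simp only [Finset.mem_filter, Set.Finite.mem_toFinset, Set.mem_inter_iff,
        Set.mem_setOf_eq]
    · intro v hv
      rw [Finset.mem_coe, Set.Finite.mem_toFinset] at hv
      obtain ⟨hvl, hv0⟩ := hv
      rw [Finset.mem_coe, Set.Finite.mem_toFinset]
      refine ⟨finrank_span_singleton hv0, ?_⟩
      rwa [Submodule.span_singleton_le_iff_mem]
  rw [Finset.sum_congr rfl (fun p hp => hfib p ((Set.toFinite t).mem_toFinset.mp hp))] at key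
  rw [Finset.sum_const, smul_eq_mul] at key
  have hcards : s.ncard = q ^ 2 - 1 := by rw [hs, ncard_nonzero_s6, h]
  have htcard : t.ncard = (Set.toFinite t).toFinset.card := Set.ncard_eq_toFinset_card t _
  have hfactor : q ^ 2 - 1 = (q + 1) * (q - 1) := by
    have hgen : ∀ n : ℕ, 2 ≤ n → n ^ 2 - 1 = (n + 1) * (n - 1) := by
      intro n hn
      obtain ⟨m, rfl⟩ : ∃ m, n = m + 2 := ⟨n - 2, by omega⟩
      show (m + 2) ^ 2 - 1 = (m + 3) * (m + 1)
      have h1 : (m + 2) ^ 2 = m ^ 2 + 4 * m + 4 := by ring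
      have h2 : (m + 3) * (m + 1) = m ^ 2 + 4 * m + 3 := by ring
      omega
    exact hgen q hq2
  have h3 : t.ncard * (q - 1) = (q + 1) * (q - 1) := by
    rw [htcard, ← key, hcards, hfactor]
  exact Nat.eq_of_mul_eq_mul_right (by omega) h3

end Aux2

section Aux3
variable {K : Type} [Field K] [Fintype K]

lemma meet_point (π l m : Submodule K (Fin 4 → K)) (hπ : Module.finrank K π = 3)
    (hl : Module.finrank K l = 2) (hm : Module.finrank K m = 2) (hlm : l ≠ m)
    (h1 : l ≤ π) (h2 : m ≤ π) :
    {p | p ∈ pgPoint K ∧ p ≤ l ∧ p ≤ m}.ncard = 1 := by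
  have hsup_le : Module.finrank K ↥(l ⊔ m) ≤ 3 := by
    have := Submodule.finrank_mono (R := K) (sup_le h1 h2)
    omega
  have hlt : l < l ⊔ m := by
    rcases lt_or_eq_of_le (le_sup_left : l ≤ l ⊔ m) with h | h
    · exact h
    · exfalso
      apply hlm
      have hml : m ≤ l := by rw [h]; exact le_sup_right
      exact (Submodule.eq_of_le_of_finrank_le hml (by omega)).symm
  have hsup_ge : 3 ≤ Module.finrank K ↥(l ⊔ m) := by
    have := Submodule.finrank_lt_finrank_of_lt hlt
    omega
  have hsum := Submodule.finrank_sup_add_finrank_inf_eq l m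
  have hinf : Module.finrank K ↥(l ⊓ m) = 1 := by omega
  have hset : {p | p ∈ pgPoint K ∧ p ≤ l ∧ p ≤ m} = {p | p ∈ pgPoint K ∧ p ≤ l ⊓ m} := by
    ext p; simp [le_inf_iff, and_assoc]
  rw [hset, pts_point _ hinf, Set.ncard_singleton]

end Aux3

section Aux4
variable {K : Type} [Field K] [Fintype K]

lemma double_count (S : Set (Submodule K (Fin 4 → K))) (hS : S ⊆ pgLine K)
    (π l : Submodule K (Fin 4 → K)) (hπpl : π ∈ pgPlane K) (hlS : l ∈ S) (hlπ : l ≤ π) :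
    ∑ p ∈ (Set.toFinite {p | p ∈ pgPoint K ∧ p ≤ l}).toFinset, (pencilS K S p π).ncard
      = (linesIn K S π).ncard + Fintype.card K := by
  classical
  set q := Fintype.card K with hq
  set Pl : Set (Submodule K (Fin 4 → K)) := {p | p ∈ pgPoint K ∧ p ≤ l} with hPl
  set PlF := (Set.toFinite Pl).toFinset with hPlF
  set SF := (Set.toFinite (linesIn K S π)).toFinset with hSF
  have hSFmem : ∀ m, m ∈ SF ↔ m ∈ S ∧ m ≤ π := by
    intro m; rw [hSF, Set.Finite.mem_toFinset]; rfl
  have hlSF : l ∈ SF := (hSFmem l).mpr ⟨hlS, hlπ⟩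
  -- rewrite each pencil ncard as a filter card
  have hpencil : ∀ p ∈ PlF, (pencilS K S p π).ncard = (SF.filter (fun m => p ≤ m)).card := by
    intro p _
    rw [Set.ncard_eq_toFinset_card _ (Set.toFinite _)]
    congr 1
    ext m
    simp only [Set.Finite.mem_toFinset, Finset.mem_filter, hSFmem]
    constructor
    · rintro ⟨h1, h2, h3⟩; exact ⟨⟨h1, h3⟩, h2⟩
    · rintro ⟨⟨h1, h3⟩, h2⟩; exact ⟨h1, h2, h3⟩
  rw [Finset.sum_congr rfl hpencil]
  -- swap the double sum
  have hswap : ∑ p ∈ PlF, (SF.filter (fun m => p ≤ m)).card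
      = ∑ m ∈ SF, (PlF.filter (fun p => p ≤ m)).card := by
    simp only [Finset.card_filter]
    exact Finset.sum_comm
  rw [hswap]
  -- evaluate inner counts
  have hπ3 : Module.finrank K π = 3 := hπpl
  have hinner : ∀ m ∈ SF, (PlF.filter (fun p => p ≤ m)).card
      = if m = l then q + 1 else 1 := by
    intro m hm
    obtain ⟨hmS, hmπ⟩ := (hSFmem m).mp hm
    by_cases hml : m = l
    · subst hml
      rw [if_pos rfl]
      have : PlF.filter (fun p => p ≤ m) = PlF := by
        apply Finset.filter_true_of_mem
        intro p hp
        exact ((Set.toFinite Pl).mem_toFinset.mp hp).2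
      rw [this, ← Set.ncard_eq_toFinset_card Pl (Set.toFinite Pl)]
      exact pts_line m (hS hmS)
    · rw [if_neg hml]
      have hset : {p | p ∈ pgPoint K ∧ p ≤ l ∧ p ≤ m}.ncard
          = (PlF.filter (fun p => p ≤ m)).card := by
        rw [Set.ncard_eq_toFinset_card _ (Set.toFinite _)]
        congr 1
        ext p
        simp only [Set.Finite.mem_toFinset, Finset.mem_filter, hPlF, hPl, Set.mem_setOf_eq]
        tauto
      rw [← hset]
      exact meet_point π l m hπ3 (hS hlS) (hS hmS) (Ne.symm hml) hlπ hmπ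
  rw [Finset.sum_congr rfl hinner]
  have : ∀ m ∈ SF, (if m = l then q + 1 else 1) = 1 + (if m = l then q else 0) := by
    intro m _; split <;> omega
  rw [Finset.sum_congr rfl this, Finset.sum_add_distrib, Finset.sum_const, smul_eq_mul,
    mul_one, Finset.sum_ite_eq' SF l (fun _ => q), if_pos hlSF,
    ← Set.ncard_eq_toFinset_card _ (Set.toFinite _)]

end Aux4


/-- For a secant plane `π` and a line `l` of `π` with `l ∈ S_π`,
the triple `(|α(l)|, |β(l)|, |γ(l)|)` equals `((q-1)/2, (q-1)/2, 2)` or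
`(0, q, 1)`. -/
theorem stmt_6 (K : Type) [Field K] [Fintype K] (q : ℕ) (hq : Fintype.card K = q)
    (hq_odd : Odd q) (S : Set (Submodule K (Fin 4 → K))) (hS : S ⊆ pgLine K)
    (h1 : P1 K S q) (h2 : P2 K S q) (h2a : P2a K S q) (h2b : P2b K S q) :
    ∀ π, IsSecant K S q π → ∀ l ∈ S, l ≤ π →
      (({p | p ∈ alphaSet K S q π ∧ p ≤ l}.ncard = (q - 1) / 2 ∧
        {p | p ∈ betaSet K S q π ∧ p ≤ l}.ncard = (q - 1) / 2 ∧
        {p | p ∈ gammaSet K S q π ∧ p ≤ l}.ncard = 2) ∨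
       ({p | p ∈ alphaSet K S q π ∧ p ≤ l}.ncard = 0 ∧
        {p | p ∈ betaSet K S q π ∧ p ≤ l}.ncard = q ∧
        {p | p ∈ gammaSet K S q π ∧ p ≤ l}.ncard = 1)) := by
  classical
  intro π hπsec l hlS hlπ
  obtain ⟨hπpl, hπcard⟩ := hπsec
  have hq2 : 2 ≤ q := by rw [← hq]; exact Fintype.one_lt_card
  obtain ⟨k, hk⟩ := hq_odd
  have hk1 : 1 ≤ k := by omega
  set Pl : Set (Submodule K (Fin 4 → K)) := {p | p ∈ pgPoint K ∧ p ≤ l} with hPl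
  set A : Set (Submodule K (Fin 4 → K)) := {p | p ∈ alphaSet K S q π ∧ p ≤ l} with hA
  set B : Set (Submodule K (Fin 4 → K)) := {p | p ∈ betaSet K S q π ∧ p ≤ l} with hB
  set C : Set (Submodule K (Fin 4 → K)) := {p | p ∈ gammaSet K S q π ∧ p ≤ l} with hC
  -- characterizations
  have hAeq : ∀ p, p ∈ A ↔ p ∈ Pl ∧ (pencilS K S p π).ncard = (q - 1) / 2 := by
    intro p
    constructor
    · rintro ⟨⟨h1', _, h3⟩, h4⟩; exact ⟨⟨h1', h4⟩, h3⟩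
    · rintro ⟨⟨h1', h4⟩, h3⟩; exact ⟨⟨h1', le_trans h4 hlπ, h3⟩, h4⟩
  have hBeq : ∀ p, p ∈ B ↔ p ∈ Pl ∧ (pencilS K S p π).ncard = (q + 1) / 2 := by
    intro p
    constructor
    · rintro ⟨⟨h1', _, h3⟩, h4⟩; exact ⟨⟨h1', h4⟩, h3⟩
    · rintro ⟨⟨h1', h4⟩, h3⟩; exact ⟨⟨h1', le_trans h4 hlπ, h3⟩, h4⟩
  have hCeq : ∀ p, p ∈ C ↔ p ∈ Pl ∧ (pencilS K S p π).ncard = q := by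
    intro p
    constructor
    · rintro ⟨⟨h1', _, h3⟩, h4⟩; exact ⟨⟨h1', h4⟩, h3⟩
    · rintro ⟨⟨h1', h4⟩, h3⟩; exact ⟨⟨h1', le_trans h4 hlπ, h3⟩, h4⟩
  have hd1 : (q - 1) / 2 = k := by omega
  have hd2 : (q + 1) / 2 = k + 1 := by omega
  have hd3 : q * (q + 1) / 2 = (2 * k + 1) * (k + 1) := by
    have : q * (q + 1) = 2 * ((2 * k + 1) * (k + 1)) := by rw [hk]; ring
    omega
  -- partition of Pl
  have hunion : Pl = A ∪ B ∪ C := by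
    ext p
    simp only [Set.mem_union, hAeq, hBeq, hCeq]
    constructor
    · intro hp
      rcases h2b π hπpl hπcard p hp.1 (le_trans hp.2 hlπ) with h | h | h
      · exact Or.inl (Or.inl ⟨hp, h⟩)
      · exact Or.inl (Or.inr ⟨hp, h⟩)
      · exact Or.inr ⟨hp, h⟩
    · rintro ((⟨hp, _⟩ | ⟨hp, _⟩) | ⟨hp, _⟩) <;> exact hp
  have hdisjAB : Disjoint A B := by
    rw [Set.disjoint_left]
    intro p hpA hpB
    rw [hAeq] at hpA; rw [hBeq] at hpB
    omega
  have hdisjABC : Disjoint (A ∪ B) C := by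
    rw [Set.disjoint_left]
    intro p hpAB hpC
    rw [hCeq] at hpC
    rcases hpAB with hpA | hpB
    · rw [hAeq] at hpA; omega
    · rw [hBeq] at hpB; omega
  -- first equation
  have hPlcard : Pl.ncard = q + 1 := by rw [← hq]; exact pts_line l (hS hlS)
  have eq1 : A.ncard + B.ncard + C.ncard = q + 1 := by
    rw [← hPlcard, hunion, Set.ncard_union_eq hdisjABC (Set.toFinite _) (Set.toFinite _),
      Set.ncard_union_eq hdisjAB (Set.toFinite _) (Set.toFinite _)]
  -- second equation via double counting
  have hPlFeq : (Set.toFinite Pl).toFinset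
      = ((Set.toFinite A).toFinset ∪ (Set.toFinite B).toFinset) ∪ (Set.toFinite C).toFinset := by
    ext p
    simp only [Finset.mem_union, Set.Finite.mem_toFinset]
    rw [show (p ∈ Pl ↔ p ∈ (A ∪ B) ∪ C) from by rw [← hunion]]
    simp [Set.mem_union]
  have hdF1 : Disjoint (Set.toFinite A).toFinset (Set.toFinite B).toFinset := by
    rw [Finset.disjoint_left]
    intro p hp hp'
    rw [Set.Finite.mem_toFinset] at hp hp'
    exact Set.disjoint_left.mp hdisjAB hp hp'
  have hdF2 : Disjoint ((Set.toFinite A).toFinset ∪ (Set.toFinite B).toFinset)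
      (Set.toFinite C).toFinset := by
    rw [Finset.disjoint_left]
    intro p hp hp'
    rw [Finset.mem_union] at hp
    rw [Set.Finite.mem_toFinset] at hp'
    refine Set.disjoint_left.mp hdisjABC ?_ hp'
    rcases hp with h | h <;> rw [Set.Finite.mem_toFinset] at h
    · exact Or.inl h
    · exact Or.inr h
  have hsum := double_count S hS π l hπpl hlS hlπ
  rw [hq, hπcard] at hsum
  -- hsum : ∑ p in PlF, (pencilS K S p π).ncard = q*(q+1)/2 + q
  have hsumsplit : ∑ p ∈ (Set.toFinite Pl).toFinset, (pencilS K S p π).ncard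
      = A.ncard * ((q - 1) / 2) + B.ncard * ((q + 1) / 2) + C.ncard * q := by
    rw [hPlFeq, Finset.sum_union hdF2, Finset.sum_union hdF1]
    have hsA : ∑ p ∈ (Set.toFinite A).toFinset, (pencilS K S p π).ncard = A.ncard * ((q - 1) / 2) := by
      rw [Finset.sum_congr rfl (fun p hp => (((hAeq p).mp ((Set.toFinite A).mem_toFinset.mp hp)).2)),
        Finset.sum_const, smul_eq_mul, ← Set.ncard_eq_toFinset_card _ (Set.toFinite _)]
    have hsB : ∑ p ∈ (Set.toFinite B).toFinset, (pencilS K S p π).ncard = B.ncard * ((q + 1) / 2) := by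
      rw [Finset.sum_congr rfl (fun p hp => (((hBeq p).mp ((Set.toFinite B).mem_toFinset.mp hp)).2)),
        Finset.sum_const, smul_eq_mul, ← Set.ncard_eq_toFinset_card _ (Set.toFinite _)]
    have hsC : ∑ p ∈ (Set.toFinite C).toFinset, (pencilS K S p π).ncard = C.ncard * q := by
      rw [Finset.sum_congr rfl (fun p hp => (((hCeq p).mp ((Set.toFinite C).mem_toFinset.mp hp)).2)),
        Finset.sum_const, smul_eq_mul, ← Set.ncard_eq_toFinset_card _ (Set.toFinite _)]
    rw [hsA, hsB, hsC]
  rw [hsumsplit] at hsum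
  -- arithmetic endgame
  set a := A.ncard
  set b := B.ncard
  set c := C.ncard
  rw [hd1, hd2, hd3] at hsum
  rw [hd1]
  -- hsum : a * k + b * (k+1) + c * q = (2k+1)*(k+1) + q ; eq1 : a + b + c = q + 1
  have e3 : b + c * (k + 1) = 3 * k + 2 := by
    have expand : (2 * k + 1) * (k + 1) = 2 * k * k + 3 * k + 1 := by ring
    have hka : a * k + b * k + c * k = (q + 1) * k := by
      rw [← eq1]; ring
    have hqk : (q + 1) * k = 2 * k * k + 2 * k := by rw [hk]; ring
    have hbk : b * (k + 1) = b * k + b := by ring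
    have hck : c * (2 * k + 1) = c * k + c * (k + 1) := by ring
    rw [hk] at hsum
    rw [hbk, hck] at hsum
    omega
  have hc2 : c ≤ 2 := by
    by_contra hc
    push_neg at hc
    have : 3 * (k + 1) ≤ c * (k + 1) := Nat.mul_le_mul_right _ (by omega)
    omega
  rw [hk] at eq1
  interval_cases c
  · omega
  · right; omega
  · left; omega
end

section
/- Let π be a secant plane and let l be a line of π with l ∉ S_π. Then the triple (|α(l)|, |β(l)|, |γ(l)|) equals ((q+1)/2, (q+1)/2, 0) or (q, 0, 1). -/
open Submodule Set



section Aux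
set_option linter.unusedSectionVars false
variable {K : Type} [Field K] [Fintype K]

lemma aux_ncard_biUnion {α β : Type} [Finite β] (s : Finset α) (f : α → Set β)
    (h : ∀ x ∈ s, ∀ y ∈ s, x ≠ y → Disjoint (f x) (f y)) :
    (⋃ a ∈ s, f a).ncard = ∑ a ∈ s, (f a).ncard := by
  classical
  induction s using Finset.induction_on with
  | empty => simp
  | @insert a s ha ih =>
    rw [Finset.set_biUnion_insert, Finset.sum_insert ha,
      ← ih (fun x hx y hy => h x (Finset.mem_insert_of_mem hx) y (Finset.mem_insert_of_mem hy))]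
    apply Set.ncard_union_eq
    · rw [Set.disjoint_iUnion₂_right]
      intro x hx
      exact h a (Finset.mem_insert_self a s) x (Finset.mem_insert_of_mem hx)
        (by rintro rfl; exact ha hx)
    · exact Set.toFinite _
    · exact Set.toFinite _

lemma aux_join_eq {p p' m : Submodule K (Fin 4 → K)} (hp : p ∈ pgPoint K) (hp' : p' ∈ pgPoint K)
    (hm : m ∈ pgLine K) (h1 : p ≤ m) (h2 : p' ≤ m) (hne : p ≠ p') : p ⊔ p' = m := by
  have hinf : p ⊓ p' < p := by
    rcases lt_or_eq_of_le (inf_le_left : p ⊓ p' ≤ p) with h | h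
    · exact h
    · exfalso
      apply hne
      exact Submodule.eq_of_le_of_finrank_eq (inf_eq_left.mp h) (hp.trans hp'.symm)
  have h0 : Module.finrank K ↥(p ⊓ p') = 0 := by
    have := Submodule.finrank_lt_finrank_of_lt hinf
    rw [hp] at this; omega
  have hsum := Submodule.finrank_sup_add_finrank_inf_eq p p'
  rw [hp, hp', h0] at hsum
  exact Submodule.eq_of_le_of_finrank_eq (sup_le h1 h2) (by rw [hm]; omega)

set_option linter.unusedSectionVars false

lemma aux_meet_point {π l m : Submodule K (Fin 4 → K)} (hπ : π ∈ pgPlane K)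
    (hl : l ∈ pgLine K) (hm : m ∈ pgLine K)
    (hlπ : l ≤ π) (hmπ : m ≤ π) (hne : m ≠ l) : m ⊓ l ∈ pgPoint K := by
  have hsum := Submodule.finrank_sup_add_finrank_inf_eq m l
  rw [hm, hl] at hsum
  have hsup : Module.finrank K ↥(m ⊔ l) ≤ 3 := by
    have := Submodule.finrank_mono (sup_le hmπ hlπ)
    rwa [hπ] at this
  have hinfle : Module.finrank K ↥(m ⊓ l) ≤ 2 := by
    have := Submodule.finrank_mono (inf_le_right : m ⊓ l ≤ l)
    rwa [hl] at this
  have hinfne : Module.finrank K ↥(m ⊓ l) ≠ 2 := by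
    intro h2
    have : m ⊓ l = l := Submodule.eq_of_le_of_finrank_eq inf_le_right (by rw [h2, hl])
    have : l ≤ m := by rw [← this]; exact inf_le_left
    exact hne (Submodule.eq_of_le_of_finrank_eq this (by rw [hl, hm])).symm
  show Module.finrank K ↥(m ⊓ l) = 1
  omega

lemma aux_card_points_on_line (l : Submodule K (Fin 4 → K)) (hl : l ∈ pgLine K) :
    {p | p ∈ pgPoint K ∧ p ≤ l}.ncard = Fintype.card K + 1 := by
  classical
  set q := Fintype.card K with hq
  set P : Set (Submodule K (Fin 4 → K)) := {p | p ∈ pgPoint K ∧ p ≤ l} with hP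
  set PF := (Set.toFinite P).toFinset with hPF
  have hmemPF : ∀ p, p ∈ PF ↔ p ∈ pgPoint K ∧ p ≤ l := by
    intro p; rw [Set.Finite.mem_toFinset]; rfl
  -- the nonzero vectors of a point
  set f : Submodule K (Fin 4 → K) → Set (Fin 4 → K) := fun p => {v | v ∈ p ∧ v ≠ 0} with hf
  -- each point has q - 1 nonzero vectors
  have hcardp : ∀ p ∈ PF, (f p).ncard + 1 = q := by
    intro p hp
    obtain ⟨hp1, _⟩ := (hmemPF p).mp hp
    have h1 : ((p : Set (Fin 4 → K))).ncard = q := by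
      rw [← Nat.card_coe_set_eq]
      have : Nat.card ↥p = Fintype.card ↥p := Nat.card_eq_fintype_card
      rw [show ((p : Set (Fin 4 → K)) : Type) = ↥p from rfl] at *
      rw [this, Module.card_eq_pow_finrank (K := K), hp1, pow_one]
    have h2 : (p : Set (Fin 4 → K)) = f p ∪ {0} := by
      ext v; simp only [hf, Set.mem_union, Set.mem_setOf_eq, Set.mem_singleton_iff, SetLike.mem_coe]
      constructor
      · intro hv; by_cases h : v = 0 <;> simp [h, hv]
      · rintro (⟨h, _⟩ | rfl); exact h; exact p.zero_mem
    rw [h2] at h1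
    rw [Set.ncard_union_eq (by simp [hf, Set.disjoint_singleton_right]) (Set.toFinite _)
      (Set.toFinite _), Set.ncard_singleton] at h1
    exact h1
  -- the union of the points' nonzero vectors is the line's nonzero vectors
  have hcover : {v | v ∈ l ∧ v ≠ 0} = ⋃ p ∈ PF, f p := by
    ext v
    simp only [Set.mem_iUnion, Set.mem_setOf_eq, hf]
    constructor
    · rintro ⟨hvl, hv0⟩
      refine ⟨span K {v}, (hmemPF _).mpr ⟨?_, ?_⟩, Submodule.mem_span_singleton_self v, hv0⟩
      · exact finrank_span_singleton hv0
      · rw [Submodule.span_le, Set.singleton_subset_iff]; exact hvl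
    · rintro ⟨p, hp, hvp, hv0⟩
      exact ⟨((hmemPF p).mp hp).2 hvp, hv0⟩
  have hdisj : ∀ x ∈ PF, ∀ y ∈ PF, x ≠ y → Disjoint (f x) (f y) := by
    intro x hx y hy hxy
    obtain ⟨hx1, _⟩ := (hmemPF x).mp hx
    obtain ⟨hy1, _⟩ := (hmemPF y).mp hy
    rw [Set.disjoint_left]
    rintro v ⟨hvx, hv0⟩ ⟨hvy, -⟩
    apply hv0
    have hinflt : x ⊓ y < x := by
      rcases lt_or_eq_of_le (inf_le_left : x ⊓ y ≤ x) with h | h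
      · exact h
      · exact absurd (Submodule.eq_of_le_of_finrank_eq (inf_eq_left.mp h)
          (by rw [hx1, hy1])) hxy
    have h0 : Module.finrank K ↥(x ⊓ y) = 0 := by
      have := Submodule.finrank_lt_finrank_of_lt hinflt
      rw [hx1] at this; omega
    have : x ⊓ y = ⊥ := Submodule.finrank_eq_zero.mp h0
    have hv : v ∈ x ⊓ y := ⟨hvx, hvy⟩
    rw [this] at hv
    simpa using hv
  -- count nonzero vectors of the line
  have hline : {v | v ∈ l ∧ v ≠ 0}.ncard + 1 = q ^ 2 := by
    have h1 : ((l : Set (Fin 4 → K))).ncard = q ^ 2 := by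
      rw [← Nat.card_coe_set_eq]
      have : Nat.card ↥l = Fintype.card ↥l := Nat.card_eq_fintype_card
      rw [show ((l : Set (Fin 4 → K)) : Type) = ↥l from rfl] at *
      rw [this, Module.card_eq_pow_finrank (K := K), hl]
    have h2 : (l : Set (Fin 4 → K)) = {v | v ∈ l ∧ v ≠ 0} ∪ {0} := by
      ext v; simp only [Set.mem_union, Set.mem_setOf_eq, Set.mem_singleton_iff, SetLike.mem_coe]
      constructor
      · intro hv; by_cases h : v = 0 <;> simp [h, hv]
      · rintro (⟨h, _⟩ | rfl); exact h; exact l.zero_mem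
    rw [h2] at h1
    rw [Set.ncard_union_eq (by simp [Set.disjoint_singleton_right]) (Set.toFinite _)
      (Set.toFinite _), Set.ncard_singleton] at h1
    exact h1
  rw [hcover, aux_ncard_biUnion PF f hdisj] at hline
  have hq2 : 2 ≤ q := Fintype.one_lt_card
  obtain ⟨n, hn⟩ : ∃ n, q = n + 2 := ⟨q - 2, by omega⟩
  have hsum : ∑ p ∈ PF, (f p).ncard = ∑ _p ∈ PF, (n + 1) :=
    Finset.sum_congr rfl (fun p hp => by have := hcardp p hp; omega)
  rw [Finset.sum_const, smul_eq_mul] at hsum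
  rw [hsum] at hline
  have hPcard : P.ncard = PF.card := by rw [hPF, Set.ncard_eq_toFinset_card P]
  rw [hPcard]
  have h1 : (q + 1) * (n + 1) + 1 = q ^ 2 := by rw [hn]; ring
  have key : PF.card * (n + 1) = (q + 1) * (n + 1) := by omega
  exact Nat.eq_of_mul_eq_mul_right (by omega) key

end Aux

/-- For a secant plane `π` and a line `l` of `π` with `l ∉ S_π`,
the triple `(|α(l)|, |β(l)|, |γ(l)|)` equals `((q+1)/2, (q+1)/2, 0)` or
`(q, 0, 1)`. -/
theorem stmt_7 (K : Type) [Field K] [Fintype K] (q : ℕ) (hq : Fintype.card K = q)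
    (hq_odd : Odd q) (S : Set (Submodule K (Fin 4 → K))) (hS : S ⊆ pgLine K)
    (h1 : P1 K S q) (h2 : P2 K S q) (h2a : P2a K S q) (h2b : P2b K S q) :
    ∀ π, IsSecant K S q π → ∀ l ∈ pgLine K, l ∉ S → l ≤ π →
      (({p | p ∈ alphaSet K S q π ∧ p ≤ l}.ncard = (q + 1) / 2 ∧
        {p | p ∈ betaSet K S q π ∧ p ≤ l}.ncard = (q + 1) / 2 ∧
        {p | p ∈ gammaSet K S q π ∧ p ≤ l}.ncard = 0) ∨
       ({p | p ∈ alphaSet K S q π ∧ p ≤ l}.ncard = q ∧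
        {p | p ∈ betaSet K S q π ∧ p ≤ l}.ncard = 0 ∧
        {p | p ∈ gammaSet K S q π ∧ p ≤ l}.ncard = 1)) := by
  
  intro π hπ l hl hlS hlπ
  obtain ⟨hπpl, hπcard⟩ := hπ
  subst hq
  classical
  set q := Fintype.card K with hq
  have hq2 : 2 ≤ q := Fintype.one_lt_card
  obtain ⟨k, hk⟩ : ∃ k, q = 2 * k + 1 := hq_odd
  have hk1 : 1 ≤ k := by omega
  have e1div : (q - 1) / 2 = k := by omega
  have e2div : (q + 1) / 2 = k + 1 := by omega
  set cnt : Submodule K (Fin 4 → K) → ℕ := fun p => (pencilS K S p π).ncard with hcnt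
  set P : Set (Submodule K (Fin 4 → K)) := {p | p ∈ pgPoint K ∧ p ≤ l} with hP
  set PF := (Set.toFinite P).toFinset with hPF
  have hmemPF : ∀ p, p ∈ PF ↔ p ∈ pgPoint K ∧ p ≤ l := fun p => by
    rw [hPF, Set.Finite.mem_toFinset]; exact Iff.rfl
  have hPFcard : PF.card = q + 1 := by
    have h := aux_card_points_on_line l hl
    rwa [Set.ncard_eq_toFinset_card _ (Set.toFinite P)] at h
  have hvals : ∀ p ∈ PF, cnt p = k ∨ cnt p = k + 1 ∨ cnt p = q := by
    intro p hp
    obtain ⟨hp1, hp2⟩ := (hmemPF p).mp hp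
    have h := h2b π hπpl hπcard p hp1 (hp2.trans hlπ)
    rw [e1div, e2div] at h
    exact h
  have hcover : linesIn K S π = ⋃ p ∈ PF, pencilS K S p π := by
    ext m
    simp only [Set.mem_iUnion]
    constructor
    · rintro ⟨hmS, hmπ⟩
      have hml : m ∈ pgLine K := hS hmS
      have hne : m ≠ l := fun h => hlS (h ▸ hmS)
      exact ⟨m ⊓ l, (hmemPF _).mpr ⟨aux_meet_point hπpl hl hml hlπ hmπ hne, inf_le_right⟩,
        hmS, inf_le_left, hmπ⟩
    · rintro ⟨p, hp, hmS, hpm, hmπ⟩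
      exact ⟨hmS, hmπ⟩
  have hdisjP : ∀ x ∈ PF, ∀ y ∈ PF, x ≠ y →
      Disjoint (pencilS K S x π) (pencilS K S y π) := by
    intro x hx y hy hxy
    obtain ⟨hx1, hx2⟩ := (hmemPF x).mp hx
    obtain ⟨hy1, hy2⟩ := (hmemPF y).mp hy
    rw [Set.disjoint_left]
    rintro m ⟨hmS, hxm, hmπ⟩ ⟨_, hym, _⟩
    have hml : m ∈ pgLine K := hS hmS
    have h1 : x ⊔ y = m := aux_join_eq hx1 hy1 hml hxm hym hxy
    have h2 : x ⊔ y = l := aux_join_eq hx1 hy1 hl hx2 hy2 hxy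
    exact hlS ((h1.symm.trans h2) ▸ hmS)
  have hdouble : ∑ p ∈ PF, cnt p = q * (q + 1) / 2 := by
    rw [← aux_ncard_biUnion PF _ hdisjP, ← hcover]
    exact hπcard
  set F1 := PF.filter (fun p => cnt p = k) with hF1
  set F2 := PF.filter (fun p => cnt p = k + 1) with hF2
  set F3 := PF.filter (fun p => cnt p = q) with hF3
  have hdisj12 : Disjoint F1 F2 := by
    rw [Finset.disjoint_left]
    intro p h1 h2
    simp only [hF1, hF2, Finset.mem_filter] at h1 h2
    omega
  have hdisj13 : Disjoint (F1 ∪ F2) F3 := by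
    rw [Finset.disjoint_left]
    intro p h1 h2
    simp only [hF1, hF2, hF3, Finset.mem_union, Finset.mem_filter] at h1 h2
    omega
  have hunion : F1 ∪ F2 ∪ F3 = PF := by
    ext p
    simp only [hF1, hF2, hF3, Finset.mem_union, Finset.mem_filter]
    constructor
    · rintro ((⟨h, _⟩ | ⟨h, _⟩) | ⟨h, _⟩) <;> exact h
    · intro hp
      rcases hvals p hp with h | h | h <;> tauto
  have hcards : F1.card + F2.card + F3.card = q + 1 := by
    rw [← hPFcard, ← hunion, Finset.card_union_of_disjoint hdisj13,
      Finset.card_union_of_disjoint hdisj12]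
  have s1 : ∑ p ∈ F1, cnt p = F1.card * k :=
    Finset.sum_const_nat (fun p hp => (Finset.mem_filter.mp hp).2)
  have s2 : ∑ p ∈ F2, cnt p = F2.card * (k + 1) :=
    Finset.sum_const_nat (fun p hp => (Finset.mem_filter.mp hp).2)
  have s3 : ∑ p ∈ F3, cnt p = F3.card * q :=
    Finset.sum_const_nat (fun p hp => (Finset.mem_filter.mp hp).2)
  have hval : q * (q + 1) / 2 = (2 * k + 1) * (k + 1) := by
    have : q * (q + 1) = 2 * ((2 * k + 1) * (k + 1)) := by rw [hk]; ring
    omega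
  have hsums : F1.card * k + F2.card * (k + 1) + F3.card * (2 * k + 1) =
      (2 * k + 1) * (k + 1) := by
    rw [← hunion, Finset.sum_union hdisj13, Finset.sum_union hdisj12, s1, s2, s3, hval]
      at hdouble
    rw [hk] at hdouble
    exact hdouble
  -- solve the linear system
  set a := F1.card
  set b := F2.card
  set c := F3.card
  have e1' : (a : ℤ) + b + c = 2 * k + 2 := by
    have : a + b + c = 2 * k + 2 := by omega
    exact_mod_cast this
  have e2' : (a : ℤ) * k + b * (k + 1) + c * (2 * k + 1) = (2 * k + 1) * (k + 1) := by
    exact_mod_cast hsums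
  have h3 : (b : ℤ) + c * (k + 1) = k + 1 := by linear_combination e2' - (k : ℤ) * e1'
  have h3' : b + c * (k + 1) = k + 1 := by exact_mod_cast h3
  have hc : c = 0 ∨ c = 1 := by
    rcases Nat.lt_or_ge c 2 with h | h
    · omega
    · exfalso
      have : 2 * (k + 1) ≤ c * (k + 1) := Nat.mul_le_mul_right _ h
      omega
  -- identify the three sets in the goal with the finsets
  have hA : {p | p ∈ alphaSet K S q π ∧ p ≤ l} = ↑F1 := by
    ext p
    constructor
    · rintro ⟨⟨hp1, hp2, hp3⟩, hp4⟩
      exact Finset.mem_coe.mpr (Finset.mem_filter.mpr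
        ⟨(hmemPF p).mpr ⟨hp1, hp4⟩, by rw [← e1div]; exact hp3⟩)
    · intro hp
      obtain ⟨hpf, hcp⟩ := Finset.mem_filter.mp (Finset.mem_coe.mp hp)
      obtain ⟨hp1, hp4⟩ := (hmemPF p).mp hpf
      exact ⟨⟨hp1, hp4.trans hlπ, by rw [e1div]; exact hcp⟩, hp4⟩
  have hB : {p | p ∈ betaSet K S q π ∧ p ≤ l} = ↑F2 := by
    ext p
    constructor
    · rintro ⟨⟨hp1, hp2, hp3⟩, hp4⟩
      exact Finset.mem_coe.mpr (Finset.mem_filter.mpr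
        ⟨(hmemPF p).mpr ⟨hp1, hp4⟩, by rw [← e2div]; exact hp3⟩)
    · intro hp
      obtain ⟨hpf, hcp⟩ := Finset.mem_filter.mp (Finset.mem_coe.mp hp)
      obtain ⟨hp1, hp4⟩ := (hmemPF p).mp hpf
      exact ⟨⟨hp1, hp4.trans hlπ, by rw [e2div]; exact hcp⟩, hp4⟩
  have hC : {p | p ∈ gammaSet K S q π ∧ p ≤ l} = ↑F3 := by
    ext p
    constructor
    · rintro ⟨⟨hp1, hp2, hp3⟩, hp4⟩
      exact Finset.mem_coe.mpr (Finset.mem_filter.mpr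
        ⟨(hmemPF p).mpr ⟨hp1, hp4⟩, hp3⟩)
    · intro hp
      obtain ⟨hpf, hcp⟩ := Finset.mem_filter.mp (Finset.mem_coe.mp hp)
      obtain ⟨hp1, hp4⟩ := (hmemPF p).mp hpf
      exact ⟨⟨hp1, hp4.trans hlπ, hcp⟩, hp4⟩
  rw [hA, hB, hC, Set.ncard_coe_finset, Set.ncard_coe_finset, Set.ncard_coe_finset]
  rcases hc with hc | hc
  · left
    rw [hc] at h3'
    have hb : b = k + 1 := by simpa using h3'
    exact ⟨by omega, by omega, hc⟩
  · right
    rw [hc] at h3'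
    have hb : b = 0 := by simpa using h3'
    exact ⟨by omega, hb, hc⟩
end

section
/- Let π be a secant plane. Then (a) the set γ(π) is an arc in the projective plane π, and (b) every line of π meeting γ(π) in exactly two points belongs to S_π. -/
open Submodule Set

section Helpers

variable {K : Type} [Field K] [Fintype K]

instance pgSubFinite : Finite (Submodule K (Fin 4 → K)) :=
  Finite.of_injective (fun W => (W : Set (Fin 4 → K))) SetLike.coe_injective

/-- a line has q+1 points -/
lemma pg_point_count {l : Submodule K (Fin 4 → K)} (hl : l ∈ pgLine K) :
    {p | p ∈ pgPoint K ∧ p ≤ l}.ncard = Fintype.card K + 1 := by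
  classical
  set q := Fintype.card K with hq
  have hq2 : 2 ≤ q := Fintype.one_lt_card
  have hfin : {p | p ∈ pgPoint K ∧ p ≤ l}.Finite := Set.toFinite _
  set P : Finset (Submodule K (Fin 4 → K)) := hfin.toFinset with hP
  rw [Set.ncard_eq_toFinset_card _ hfin]
  have hmemP : ∀ p, p ∈ P ↔ p ∈ pgPoint K ∧ p ≤ l := by
    intro p; simp [hP, Set.Finite.mem_toFinset]
  -- nonzero vectors of l
  set T : Finset (Fin 4 → K) := ((l : Set (Fin 4 → K)).toFinset).erase 0 with hT
  have hmemT : ∀ v, v ∈ T ↔ v ∈ l ∧ v ≠ 0 := by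
    intro v; simp [hT, Finset.mem_erase, Set.mem_toFinset, and_comm]
  have hTcard : T.card = q ^ 2 - 1 := by
    rw [hT, Finset.card_erase_of_mem (by simp [Set.mem_toFinset])]
    congr 1
    rw [Set.toFinset_card]
    have := Module.card_eq_pow_finrank (K := K) (V := ↥l)
    rw [hl] at this
    simpa using this
  have hmap : ∀ v ∈ T, Submodule.span K {v} ∈ P := by
    intro v hv
    rw [hmemT] at hv
    rw [hmemP]
    exact ⟨finrank_span_singleton hv.2, Submodule.span_le.2 (Set.singleton_subset_iff.2 hv.1)⟩
  have hcount := Finset.card_eq_sum_card_fiberwise hmap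
  have hfib : ∀ p ∈ P, (T.filter fun v => Submodule.span K {v} = p).card = q - 1 := by
    intro p hp
    rw [hmemP] at hp
    obtain ⟨hp1, hpl⟩ := hp
    have hfe : (T.filter fun v => Submodule.span K {v} = p)
        = ((p : Set (Fin 4 → K)).toFinset).erase 0 := by
      ext v
      simp only [Finset.mem_filter, hmemT, Finset.mem_erase, Set.mem_toFinset, SetLike.mem_coe]
      constructor
      · rintro ⟨⟨hvl, hv0⟩, hsp⟩
        exact ⟨hv0, hsp ▸ Submodule.mem_span_singleton_self v⟩
      · rintro ⟨hv0, hvp⟩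
        have hle : Submodule.span K {v} ≤ p := Submodule.span_le.2 (Set.singleton_subset_iff.2 hvp)
        have heq : Submodule.span K {v} = p :=
          Submodule.eq_of_le_of_finrank_eq hle (by rw [finrank_span_singleton hv0, hp1])
        exact ⟨⟨hpl hvp, hv0⟩, heq⟩
    rw [hfe, Finset.card_erase_of_mem (by simp [Set.mem_toFinset])]
    congr 1
    rw [Set.toFinset_card]
    have := Module.card_eq_pow_finrank (K := K) (V := ↥p)
    rw [hp1] at this
    simpa using this
  rw [Finset.sum_congr rfl hfib, Finset.sum_const, smul_eq_mul] at hcount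
  have hfact : q ^ 2 - 1 = (q + 1) * (q - 1) := by
    have : q ^ 2 - 1 ^ 2 = (q + 1) * (q - 1) := Nat.sq_sub_sq q 1
    simpa using this
  rw [hTcard, hfact] at hcount
  exact Nat.eq_of_mul_eq_mul_right (by omega) hcount.symm

/-- two distinct lines in a plane meet in exactly one point -/
lemma pg_inter_point {π l m : Submodule K (Fin 4 → K)} (hπ : π ∈ pgPlane K)
    (hl : l ∈ pgLine K) (hm : m ∈ pgLine K) (hlπ : l ≤ π) (hmπ : m ≤ π) (hne : m ≠ l) :
    ∀ p, (p ∈ pgPoint K ∧ p ≤ l ∧ p ≤ m) ↔ p = m ⊓ l := by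
  have hl2 : Module.finrank K ↥l = 2 := hl
  have hm2 : Module.finrank K ↥m = 2 := hm
  have hπ3 : Module.finrank K ↥π = 3 := hπ
  have hsup_le : m ⊔ l ≤ π := sup_le hmπ hlπ
  have hsup_le3 : Module.finrank K ↥(m ⊔ l) ≤ 3 := hπ3 ▸ Submodule.finrank_mono hsup_le
  have hlt : m < m ⊔ l := by
    rcases lt_or_eq_of_le (le_sup_left : m ≤ m ⊔ l) with h | h
    · exact h
    · exfalso
      have hlm : l ≤ m := h ▸ le_sup_right
      exact hne (Submodule.eq_of_le_of_finrank_eq hlm (by rw [hl2, hm2])).symm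
  have h3 : Module.finrank K ↥(m ⊔ l) = 3 := by
    have := Submodule.finrank_lt_finrank_of_lt hlt
    omega
  have hinf1 : Module.finrank K ↥(m ⊓ l) = 1 := by
    have := Submodule.finrank_sup_add_finrank_inf_eq m l
    rw [h3, hl2, hm2] at this
    omega
  intro p
  constructor
  · rintro ⟨hp1, hpl, hpm⟩
    exact Submodule.eq_of_le_of_finrank_eq (le_inf hpm hpl) (by rw [hp1, hinf1])
  · rintro rfl
    exact ⟨hinf1, inf_le_right, inf_le_left⟩

end Helpers

section Helpers2

variable {K : Type} [Field K] [Fintype K]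

open Classical in
lemma pg_incidence {S : Set (Submodule K (Fin 4 → K))} (hS : S ⊆ pgLine K)
    {π l : Submodule K (Fin 4 → K)} (hπ : π ∈ pgPlane K) (hl : l ∈ pgLine K) (hlπ : l ≤ π) :
    ∑ p ∈ ({p | p ∈ pgPoint K ∧ p ≤ l}).toFinite.toFinset, (pencilS K S p π).ncard
      = (linesIn K S π).ncard + (if l ∈ S then Fintype.card K else 0) := by
  classical
  set PF := ({p | p ∈ pgPoint K ∧ p ≤ l}).toFinite.toFinset with hPF
  have hmemP : ∀ p, p ∈ PF ↔ p ∈ pgPoint K ∧ p ≤ l := by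
    intro p; simp [hPF]
  set M := (linesIn K S π).toFinite.toFinset with hM
  have hmemM : ∀ m, m ∈ M ↔ m ∈ S ∧ m ≤ π := by
    intro m; simp [hM, linesIn]
  have hpen : ∀ p, (pencilS K S p π).ncard = (M.filter fun m => p ≤ m).card := by
    intro p
    rw [← Set.ncard_coe_finset]
    congr 1
    ext m
    simp only [pencilS, Set.mem_setOf_eq, Finset.coe_filter, hmemM]
    tauto
  calc ∑ p ∈ PF, (pencilS K S p π).ncard
      = ∑ p ∈ PF, ∑ m ∈ M, (if p ≤ m then 1 else 0) := by
        refine Finset.sum_congr rfl fun p _ => ?_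
        rw [hpen, Finset.card_filter]
    _ = ∑ m ∈ M, ∑ p ∈ PF, (if p ≤ m then 1 else 0) := Finset.sum_comm
    _ = ∑ m ∈ M, (PF.filter fun p => p ≤ m).card := by
        refine Finset.sum_congr rfl fun m _ => ?_
        rw [Finset.card_filter]
    _ = ∑ m ∈ M, (if m = l then Fintype.card K + 1 else 1) := by
        refine Finset.sum_congr rfl fun m hm => ?_
        rw [hmemM] at hm
        by_cases hml : m = l
        · rw [if_pos hml]
          subst hml
          rw [Finset.filter_true_of_mem (fun p hp => ((hmemP p).1 hp).2)]
          rw [← pg_point_count hl, Set.ncard_eq_toFinset_card _ (Set.toFinite _)]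
        · rw [if_neg hml]
          rw [Finset.card_eq_one]
          refine ⟨m ⊓ l, ?_⟩
          ext p
          rw [Finset.mem_filter, hmemP, Finset.mem_singleton, and_assoc,
            pg_inter_point hπ hl (hS hm.1) hlπ hm.2 hml p]
    _ = ∑ m ∈ M, (1 + if m = l then Fintype.card K else 0) := by
        refine Finset.sum_congr rfl fun m _ => ?_
        by_cases hml : m = l <;> simp [hml, add_comm]
    _ = (linesIn K S π).ncard + (if l ∈ S then Fintype.card K else 0) := by
        rw [Finset.sum_add_distrib, Finset.sum_const, smul_eq_mul, mul_one,
          Finset.sum_ite_eq' M l fun _ => Fintype.card K]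
        congr 1
        · rw [Set.ncard_eq_toFinset_card _ (Set.toFinite _)]
        · congr 1
          rw [eq_iff_iff, hmemM]
          exact ⟨fun h => h.1, fun h => ⟨h, hlπ⟩⟩

end Helpers2

section Main

variable {K : Type} [Field K] [Fintype K]

set_option maxHeartbeats 1000000 in
open Classical in
lemma pg_line_analysis {q r : ℕ} (hq : Fintype.card K = q) (hqr : q = 2 * r + 1) (hr : 1 ≤ r)
    {S : Set (Submodule K (Fin 4 → K))} (hS : S ⊆ pgLine K)
    {π : Submodule K (Fin 4 → K)} (hπ : π ∈ pgPlane K)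
    (hN : (linesIn K S π).ncard = q * (q + 1) / 2)
    (h2b : P2b K S q)
    {l : Submodule K (Fin 4 → K)} (hl : l ∈ pgLine K) (hlπ : l ≤ π) :
    ({p | p ∈ gammaSet K S q π ∧ p ≤ l}.ncard ≤ 2 ∧
      ({p | p ∈ gammaSet K S q π ∧ p ≤ l}.ncard = 2 → l ∈ S)) ∧
    (l ∈ S → ∃ p, p ∈ gammaSet K S q π ∧ p ≤ l) := by
  classical
  set PF := ({p | p ∈ pgPoint K ∧ p ≤ l}).toFinite.toFinset with hPF
  have hmemP : ∀ p, p ∈ PF ↔ p ∈ pgPoint K ∧ p ≤ l := by intro p; simp [hPF]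
  have hPcard : PF.card = q + 1 := by
    rw [← Set.ncard_eq_toFinset_card _ (Set.toFinite _), pg_point_count hl, hq]
  have hpen : ∀ p ∈ PF, (pencilS K S p π).ncard = r ∨ (pencilS K S p π).ncard = r + 1 ∨
      (pencilS K S p π).ncard = q := by
    intro p hp
    rw [hmemP] at hp
    have h := h2b π hπ hN p hp.1 (hp.2.trans hlπ)
    have e1 : (q - 1) / 2 = r := by omega
    have e2 : (q + 1) / 2 = r + 1 := by omega
    rw [e1, e2] at h
    exact h
  set Pg := PF.filter (fun p => (pencilS K S p π).ncard = q) with hPg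
  have hgset : {p | p ∈ gammaSet K S q π ∧ p ≤ l} = ↑Pg := by
    ext p
    simp only [Set.mem_setOf_eq, gammaSet, hPg, Finset.coe_filter, hmemP]
    constructor
    · rintro ⟨⟨h1, _, h3⟩, h4⟩; exact ⟨⟨h1, h4⟩, h3⟩
    · rintro ⟨⟨h1, h4⟩, h3⟩; exact ⟨⟨h1, h4.trans hlπ, h3⟩, h4⟩
  set c := Pg.card with hcdef
  have hc : {p | p ∈ gammaSet K S q π ∧ p ≤ l}.ncard = c := by
    rw [hgset, Set.ncard_coe_finset]
  have hcle : c ≤ q + 1 := hPcard ▸ Finset.card_filter_le _ _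
  have htot := pg_incidence hS hπ hl hlπ
  rw [hN, hq, ← hPF] at htot
  have hNval : q * (q + 1) / 2 = (2 * r + 1) * (r + 1) := by
    subst hqr
    rw [show (2 * r + 1) * ((2 * r + 1) + 1) = 2 * ((2 * r + 1) * (r + 1)) by ring,
      Nat.mul_div_cancel_left _ two_pos]
  rw [hNval] at htot
  have hsplit := Finset.sum_filter_add_sum_filter_not PF
    (fun p => (pencilS K S p π).ncard = q) (fun p => (pencilS K S p π).ncard)
  have hsum_g : ∑ p ∈ Pg, (pencilS K S p π).ncard = c * q := by
    rw [Finset.sum_congr rfl (fun p hp => (Finset.mem_filter.1 hp).2),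
      Finset.sum_const, smul_eq_mul]
  have hcard_ng : (PF.filter (fun p => ¬ (pencilS K S p π).ncard = q)).card = q + 1 - c := by
    rw [Finset.filter_not, Finset.card_sdiff_of_subset (Finset.filter_subset _ _), hPcard, ← hPg]
  have hsum_ng_lb : (q + 1 - c) * r ≤
      ∑ p ∈ PF.filter (fun p => ¬ (pencilS K S p π).ncard = q), (pencilS K S p π).ncard := by
    rw [← hcard_ng]
    have h := Finset.card_nsmul_le_sum
      (PF.filter (fun p => ¬ (pencilS K S p π).ncard = q))
      (fun p => (pencilS K S p π).ncard) r
      (fun p hp => by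
        show r ≤ (pencilS K S p π).ncard
        have hp' := Finset.mem_filter.1 hp
        rcases hpen p hp'.1 with h | h | h <;> omega)
    simpa [smul_eq_mul] using h
  -- total sum value combined
  constructor
  · -- c ≤ 2 and c = 2 → l ∈ S
    have hkey : ∀ (hc2 : ¬ l ∈ S), c ≤ 1 := by
      intro hlS
      rw [if_neg hlS, add_zero] at htot
      have hle : c * q + (q + 1 - c) * r ≤ (2 * r + 1) * (r + 1) := by
        calc c * q + (q + 1 - c) * r ≤ ∑ p ∈ Pg, (pencilS K S p π).ncard +
            ∑ p ∈ PF.filter (fun p => ¬ (pencilS K S p π).ncard = q),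
              (pencilS K S p π).ncard := by
              rw [hsum_g]; exact Nat.add_le_add_left hsum_ng_lb _
          _ = (2 * r + 1) * (r + 1) := by rw [hsplit, htot]
      by_contra hcgt
      push_neg at hcgt
      obtain ⟨d, hcd⟩ : ∃ d, c + d = 2 * r + 2 := ⟨q + 1 - c, by omega⟩
      have hdval : q + 1 - c = d := by omega
      rw [hdval, hqr] at hle
      have h2 : c * (r + 1) + (2 * r + 2) * r ≤ (2 * r + 1) * (r + 1) := by
        calc c * (r + 1) + (2 * r + 2) * r = c * (2 * r + 1) + d * r := by
              rw [← hcd]; ring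
          _ ≤ _ := hle
      have h3 : 2 * (r + 1) ≤ c * (r + 1) := Nat.mul_le_mul_right _ hcgt
      nlinarith [h2, h3]
    have hc2 : c ≤ 2 := by
      by_cases hlS : l ∈ S
      · rw [if_pos hlS] at htot
        have hle : c * q + (q + 1 - c) * r ≤ (2 * r + 1) * (r + 1) + q := by
          calc c * q + (q + 1 - c) * r ≤ ∑ p ∈ Pg, (pencilS K S p π).ncard +
              ∑ p ∈ PF.filter (fun p => ¬ (pencilS K S p π).ncard = q),
                (pencilS K S p π).ncard := by
                rw [hsum_g]; exact Nat.add_le_add_left hsum_ng_lb _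
            _ = (2 * r + 1) * (r + 1) + q := by rw [hsplit, htot]
        by_contra hcgt
        push_neg at hcgt
        obtain ⟨d, hcd⟩ : ∃ d, c + d = 2 * r + 2 := ⟨q + 1 - c, by omega⟩
        have hdval : q + 1 - c = d := by omega
        rw [hdval, hqr] at hle
        have h2 : c * (r + 1) + (2 * r + 2) * r ≤ (2 * r + 1) * (r + 1) + (2 * r + 1) := by
          calc c * (r + 1) + (2 * r + 2) * r = c * (2 * r + 1) + d * r := by
                rw [← hcd]; ring
            _ ≤ _ := hle
        have h3 : 3 * (r + 1) ≤ c * (r + 1) := Nat.mul_le_mul_right _ hcgt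
        nlinarith [h2, h3]
      · exact (hkey hlS).trans (by norm_num)
    refine ⟨hc ▸ hc2, ?_⟩
    intro h2
    rw [hc] at h2
    by_contra hlS
    have := hkey hlS
    omega
  · -- nonemptiness on l when l ∈ S
    intro hlS
    by_contra hng
    push_neg at hng
    rw [if_pos hlS] at htot
    have hub : ∀ p ∈ PF, (pencilS K S p π).ncard ≤ r + 1 := by
      intro p hp
      rcases hpen p hp with h | h | h
      · omega
      · omega
      · exfalso
        rw [hmemP] at hp
        exact hng p ⟨hp.1, hp.2.trans hlπ, h⟩ hp.2
    have hsum_ub : ∑ p ∈ PF, (pencilS K S p π).ncard ≤ (q + 1) * (r + 1) := by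
      have h := Finset.sum_le_card_nsmul PF (fun p => (pencilS K S p π).ncard) (r + 1) hub
      rw [hPcard] at h
      simpa [smul_eq_mul] using h
    rw [htot] at hsum_ub
    nlinarith [hsum_ub, hr, hqr, mul_le_mul_left hqr.le (r + 1)]

end Main

/-- For a secant plane `π`: (a) `γ(π)` is an arc in `π` (nonempty
and no line of `π` meets it in more than two points), and (b) every line of `π`
meeting `γ(π)` in exactly two points belongs to `S_π`. -/
theorem stmt_8 (K : Type) [Field K] [Fintype K] (q : ℕ) (hq : Fintype.card K = q)
    (hq_odd : Odd q) (S : Set (Submodule K (Fin 4 → K))) (hS : S ⊆ pgLine K)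
    (h1 : P1 K S q) (h2 : P2 K S q) (h2a : P2a K S q) (h2b : P2b K S q) :
    ∀ π, IsSecant K S q π →
      ((gammaSet K S q π).Nonempty ∧
        (∀ l ∈ pgLine K, l ≤ π →
          {p | p ∈ gammaSet K S q π ∧ p ≤ l}.ncard ≤ 2)) ∧
      (∀ l ∈ pgLine K, l ≤ π →
        {p | p ∈ gammaSet K S q π ∧ p ≤ l}.ncard = 2 → l ∈ S) := by
  intro π hsec
  obtain ⟨hπP, hπN⟩ := hsec
  obtain ⟨r, hr'⟩ := hq_odd
  have hq2 : 2 ≤ q := hq ▸ Fintype.one_lt_card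
  have hqr : q = 2 * r + 1 := by omega
  have hr : 1 ≤ r := by omega
  have main := fun l (hl : l ∈ pgLine K) (hlπ : l ≤ π) =>
    pg_line_analysis hq hqr hr hS hπP hπN h2b hl hlπ
  refine ⟨⟨?_, fun l hl hlπ => (main l hl hlπ).1.1⟩,
    fun l hl hlπ h2 => (main l hl hlπ).1.2 h2⟩
  have hNpos : (linesIn K S π).ncard ≠ 0 := by
    rw [hπN, hqr]
    rw [show (2 * r + 1) * ((2 * r + 1) + 1) = 2 * ((2 * r + 1) * (r + 1)) by ring,
      Nat.mul_div_cancel_left _ two_pos]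
    positivity
  obtain ⟨m, hm⟩ := Set.nonempty_of_ncard_ne_zero hNpos
  have hm' : m ∈ S ∧ m ≤ π := hm
  obtain ⟨p, hp⟩ := (main m (hS hm'.1) hm'.2).2 hm'.1
  exact ⟨p, hp.1⟩
end
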